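/- arXiv:1902.00213 — 10 statements merged into one kernel-verified Lean document; each statement's English description precedes it below -/
import Mathlib

section
/- A bipartite graph G with bipartition (X,Y) admits an S-free pair of orderings if and only if the partially oriented complement of G admits an acyclic T-free orientation (i.e., an orientation of all edges within X and within Y, leaving edges between X and Y of the bipartite complement undirected, such that no two independent edges of the bipartite complement agree, and the orientations within X and within Y are acyclic). -/
namespace CocompBigraph

variable {V : Type*}

/-- `side` is a bipartition of the simple graph `G`: edges only join the two sides. -/
def IsBipartition (G : SimpleGraph V) (side : V → Bool) : Prop :=
  ∀ u v, G.Adj u v → side u ≠ side v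

/-- Two edges `xy`, `x'y'` (with `x, x'` on one side and `y, y'` on the other) are
independent: they are disjoint and neither `xy'` nor `x'y` is an edge. -/
def Indep (G : SimpleGraph V) (x y x' y' : V) : Prop :=
  G.Adj x y ∧ G.Adj x' y' ∧ x ≠ x' ∧ y ≠ y' ∧ ¬ G.Adj x y' ∧ ¬ G.Adj x' y

/-- `w` is a walk of length `n` in `G` (vertices `w 0, …, w n`). -/
def IsWalk (G : SimpleGraph V) (n : ℕ) (w : ℕ → V) : Prop :=
  ∀ i < n, G.Adj (w i) (w (i+1))

/-- Two walks of the same length `n`, beginning on the same side, are congruent if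
for each `i` their `i`-th edges are independent. -/
def CongWalks (G : SimpleGraph V) (side : V → Bool) (n : ℕ) (w w' : ℕ → V) : Prop :=
  side (w 0) = side (w' 0) ∧
  IsWalk G n w ∧ IsWalk G n w' ∧
  ∀ i < n, Indep G (w i) (w (i+1)) (w' i) (w' (i+1))

/-- `(a,b) Γ (f,g)`: there are congruent walks from `a` to `f` and from `b` to `g`. -/
def Gamma (G : SimpleGraph V) (side : V → Bool) (a b f g : V) : Prop :=
  ∃ n, ∃ w w' : ℕ → V, CongWalks G side n w w' ∧
    w 0 = a ∧ w' 0 = b ∧ w n = f ∧ w' n = g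

/-- A pair of distinct vertices `u, v` is invertible if there are congruent walks
from `u` to `v` and from `v` to `u`. -/
def InvertiblePair (G : SimpleGraph V) (side : V → Bool) (u v : V) : Prop :=
  u ≠ v ∧ Gamma G side u v v u

/-- A pair `(a,b)` is relevant if its implication class contains at least two pairs. -/
def Relevant (G : SimpleGraph V) (side : V → Bool) (a b : V) : Prop :=
  ∃ f g, Gamma G side a b f g ∧ (f, g) ≠ (a, b)

/-- An orientation of the complement of `G`: every pair of distinct vertices on the
same side gets exactly one direction (cross pairs stay undirected). -/
def IsOrientation (side : V → Bool) (O : V → V → Prop) : Prop :=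
  (∀ u v, O u v → side u = side v ∧ u ≠ v) ∧
  (∀ u v, u ≠ v → side u = side v → (O u v ↔ ¬ O v u))

/-- The orientation `O` is `T`-free: no two independent edges of the bipartite
complement agree in `O`. -/
def TFree (G : SimpleGraph V) (side : V → Bool) (O : V → V → Prop) : Prop :=
  ∀ x y x' y', side x = side x' → side y = side y' → side x ≠ side y →
    x ≠ x' → y ≠ y' → ¬ G.Adj x y → ¬ G.Adj x' y' →
    G.Adj x y' → G.Adj x' y → ¬ (O x x' ∧ O y y')

/-- The relation `O` has no directed cycle. -/
def OAcyclic (O : V → V → Prop) : Prop :=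
  ∀ (n : ℕ) (w : ℕ → V), 0 < n → (∀ i < n, O (w i) (w (i+1))) → w 0 ≠ w n

/-- `G` has an `S`-free pair of orderings: linear orders of the two sides such that
no two independent edges cross. -/
def SFreePair (G : SimpleGraph V) (side : V → Bool) : Prop :=
  ∃ lt : V → V → Prop,
    (∀ u v, lt u v → side u = side v ∧ u ≠ v) ∧
    (∀ u v, u ≠ v → side u = side v → (lt u v ↔ ¬ lt v u)) ∧
    (∀ u v w, lt u v → lt v w → lt u w) ∧
    (∀ u v w z, side u ≠ side w → lt u v → lt w z →
      G.Adj u z → G.Adj v w → (G.Adj u w ∨ G.Adj v z))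

/-- An edge-asteroid: `2k+1` distinct edges `x i — y i` such that for each `i` there
is a walk joining the edges `e (i+k)` and `e (i+k+1)` (including both endpoints of
each) containing no vertex adjacent to either end of `e i`. -/
def EdgeAsteroid (G : SimpleGraph V) (k : ℕ) (x y : ZMod (2*k+1) → V) : Prop :=
  1 ≤ k ∧
  (∀ i, G.Adj (x i) (y i)) ∧
  (∀ i j : ZMod (2*k+1), i ≠ j → (x i, y i) ≠ (x j, y j)) ∧
  ∀ i : ZMod (2*k+1), ∃ n, ∃ w : ℕ → V, IsWalk G n w ∧ 1 ≤ n ∧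
    ((w 0 = x (i+k) ∧ w 1 = y (i+k)) ∨ (w 0 = y (i+k) ∧ w 1 = x (i+k))) ∧
    ((w (n-1) = y (i+k+1) ∧ w n = x (i+k+1)) ∨
      (w (n-1) = x (i+k+1) ∧ w n = y (i+k+1))) ∧
    ∀ j ≤ n, ¬ G.Adj (w j) (x i) ∧ ¬ G.Adj (w j) (y i)

/-- An asteroid in a graph `H`: `2k+1` distinct vertices such that for each `i` there
is a path joining `v (i+k)` and `v (i+k+1)` none of whose vertices is a neighbour
of `v i`. -/
def Asteroid {W : Type*} (H : SimpleGraph W) (k : ℕ) (v : ZMod (2*k+1) → W) : Prop :=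
  1 ≤ k ∧ Function.Injective v ∧
  ∀ i : ZMod (2*k+1), ∃ n, ∃ w : ℕ → W, IsWalk H n w ∧
    w 0 = v (i+k) ∧ w n = v (i+(k+1)) ∧
    (∀ a ≤ n, ∀ b ≤ n, w a = w b → a = b) ∧
    ∀ j ≤ n, ¬ H.Adj (w j) (v i)

/-- The independence graph `I(G)`: vertices are the edges of `G` (oriented from side
`true` to side `false`), adjacent iff independent. -/
def IndepGraph (G : SimpleGraph V) (side : V → Bool) :
    SimpleGraph {p : V × V // G.Adj p.1 p.2 ∧ side p.1 = true} where
  Adj e f := Indep G e.1.1 e.1.2 f.1.1 f.1.2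
  symm := by
    constructor
    rintro e f ⟨h1, h2, h3, h4, h5, h6⟩
    exact ⟨h2, h1, h3.symm, h4.symm, h6, h5⟩
  loopless := by
    constructor
    rintro e ⟨_, _, h3, _⟩
    exact h3 rfl

/-- A graph is a comparability graph iff it has a transitive orientation. -/
def HasTransitiveOrientation {W : Type*} (H : SimpleGraph W) : Prop :=
  ∃ r : W → W → Prop,
    (∀ u v, r u v → H.Adj u v) ∧
    (∀ u v, H.Adj u v → (r u v ↔ ¬ r v u)) ∧
    (∀ u v w, r u v → r v w → r u w)

/-- The cycle `C_n` on vertex set `ZMod n`. -/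
def cycleGraph (n : ℕ) : SimpleGraph (ZMod n) where
  Adj i j := i ≠ j ∧ (j = i + 1 ∨ i = j + 1)
  symm := by constructor; rintro i j ⟨h, h'⟩; exact ⟨h.symm, h'.symm⟩
  loopless := by constructor; rintro i ⟨h, _⟩; exact h rfl

/-- `G` contains an induced cycle of length `n`. -/
def HasInducedCycle (G : SimpleGraph V) (n : ℕ) : Prop :=
  ∃ f : ZMod n → V, Function.Injective f ∧
    ∀ i j, G.Adj (f i) (f j) ↔ (cycleGraph n).Adj i j

/-- Adjacency of the auxiliary graph `G⁺` on ordered pairs: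
`(u,v)` is adjacent to `(v,u)` and to every `(z,w)` such that `uw` and `vz` are
independent edges of `G`. -/
def AuxAdj (G : SimpleGraph V) (p q : V × V) : Prop :=
  (q.1 = p.2 ∧ q.2 = p.1) ∨
  (G.Adj p.1 q.2 ∧ G.Adj p.2 q.1 ∧ p.1 ≠ p.2 ∧ q.1 ≠ q.2 ∧
    ¬ G.Adj p.1 q.1 ∧ ¬ G.Adj p.2 q.2)

/-- The auxiliary graph `G⁺`, on the set `F` of ordered pairs of distinct same-side
vertices, is bipartite (i.e. properly 2-colourable). -/
def AuxBipartite (G : SimpleGraph V) (side : V → Bool) : Prop :=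
  ∃ c : {p : V × V // p.1 ≠ p.2 ∧ side p.1 = side p.2} → Bool,
    ∀ p q, AuxAdj G p.1 q.1 → c p ≠ c q

/-- `G` is an interval containment bigraph. -/
def IntervalContainment (G : SimpleGraph V) (side : V → Bool) : Prop :=
  ∃ l r : V → ℝ, (∀ v, l v ≤ r v) ∧
    ∀ x y, side x = true → side y = false →
      (G.Adj x y ↔ (l x ≤ l y ∧ r y ≤ r x))

lemma chain_lt {lt : V → V → Prop}
    (htrans : ∀ u v w, lt u v → lt v w → lt u w) :
    ∀ n, 0 < n → ∀ w : ℕ → V, (∀ i < n, lt (w i) (w (i+1))) → lt (w 0) (w n)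
  | 0, h, _, _ => absurd h (lt_irrefl 0)
  | 1, _, _, hw => hw 0 one_pos
  | (n+2), _, w, hw =>
    htrans _ _ _
      (chain_lt htrans (n+1) (Nat.succ_pos n) w (fun i hi => hw i (Nat.lt_succ_of_lt hi)))
      (hw (n+1) (Nat.lt_succ_self _))

/-- `G` admits an `S`-free pair of orderings iff the complement of `G`
admits an acyclic `T`-free orientation. -/
theorem stmt_1 (G : SimpleGraph V) (side : V → Bool) (hbip : IsBipartition G side) :
    SFreePair G side ↔
      ∃ O : V → V → Prop, IsOrientation side O ∧ TFree G side O ∧ OAcyclic O := by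
  constructor
  · rintro ⟨lt, h1, h2, h3, h4⟩
    refine ⟨lt, ⟨h1, h2⟩, ?_, ?_⟩
    · rintro x y x' y' hsx hsy hsxy hxx' hyy' hnxy hnx'y' hxy' hx'y ⟨hO1, hO2⟩
      rcases h4 x x' y y' hsxy hO1 hO2 hxy' hx'y with h | h
      · exact hnxy h
      · exact hnx'y' h
    · intro n w hn hw
      exact (h1 _ _ (chain_lt h3 n hn w hw)).2
  · rintro ⟨O, ⟨hO1, hO2⟩, hT, hAc⟩
    have htrans : ∀ u v w, O u v → O v w → O u w := by
      intro u v w huv hvw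
      by_cases h : u = w
      · subst h
        exact absurd rfl (hAc 2 (fun i => if i = 1 then v else u) two_pos
          (by
            intro i hi
            interval_cases i <;> simp [huv, hvw]))
      · have hs : side u = side w := (hO1 _ _ huv).1.trans (hO1 _ _ hvw).1
        by_contra hc
        have how : O w u := (hO2 w u (Ne.symm h) hs.symm).mpr hc
        exact absurd rfl (hAc 3 (fun i => if i = 0 then u else if i = 1 then v else if i = 2 then w else u) (by norm_num)
          (by
            intro i hi
            interval_cases i <;> simp [huv, hvw, how]))
    refine ⟨O, hO1, hO2, htrans, ?_⟩
    intro u v w z hside huv hwz huz hvw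
    by_contra hc
    push_neg at hc
    exact hT u w v z (hO1 _ _ huv).1 (hO1 _ _ hwz).1 hside
      (hO1 _ _ huv).2 (hO1 _ _ hwz).2 hc.1 hc.2 huz hvw ⟨huv, hwz⟩


end CocompBigraph
end

section
/- If a bipartite graph G contains an edge-asteroid, then G contains an invertible pair. -/
namespace CocompBigraph

variable {V : Type*}

/-! ### Auxiliary machinery for stmt_3 -/

/-- Oscillating walk on an edge `p q`. -/
private def osc (p q : V) : ℕ → V := fun i => if i % 2 = 0 then p else q

private lemma osc_zero (p q : V) : osc p q 0 = p := rfl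

private lemma osc_mem (p q : V) (i : ℕ) : osc p q i = p ∨ osc p q i = q := by
  unfold osc; split <;> simp

private lemma isWalk_osc {G : SimpleGraph V} {p q : V} (h : G.Adj p q) (n : ℕ) :
    IsWalk G n (osc p q) := by
  intro i _
  unfold osc
  rcases Nat.mod_two_eq_zero_or_one i with h2 | h2
  · have h3 : (i+1) % 2 = 1 := by omega
    simp [h2, h3]; exact h
  · have h3 : (i+1) % 2 = 0 := by omega
    simp [h2, h3]; exact h.symm

/-- Prepend a vertex to a walk. -/
private def wcons (a : V) (w : ℕ → V) : ℕ → V := fun i => if i = 0 then a else w (i - 1)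

private lemma wcons_zero (a : V) (w : ℕ → V) : wcons a w 0 = a := rfl

private lemma wcons_succ (a : V) (w : ℕ → V) (j : ℕ) : wcons a w (j+1) = w j := by
  simp [wcons]

private lemma isWalk_wcons {G : SimpleGraph V} {a : V} {w : ℕ → V} {n : ℕ}
    (ha : G.Adj a (w 0)) (hw : IsWalk G n w) : IsWalk G (n+1) (wcons a w) := by
  intro i hi
  cases i with
  | zero => rw [wcons_zero, wcons_succ]; exact ha
  | succ j => rw [wcons_succ, wcons_succ]; exact hw j (by omega)

/-- Concatenation of walks. -/
private def wapp (n : ℕ) (w u : ℕ → V) : ℕ → V := fun i => if i < n then w i else u (i - n)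

private lemma wapp_left {n : ℕ} {w u : ℕ → V} (h0 : u 0 = w n) {i : ℕ} (hi : i ≤ n) :
    wapp n w u i = w i := by
  unfold wapp; split
  · rfl
  · have hin : i = n := by omega
    subst hin; simpa using h0

private lemma wapp_right {n : ℕ} (w u : ℕ → V) {i : ℕ} (hi : n ≤ i) :
    wapp n w u i = u (i - n) := by
  unfold wapp; rw [if_neg (by omega)]

private lemma indep_swap {G : SimpleGraph V} {p q r s : V} (h : Indep G p q r s) :
    Indep G r s p q :=
  ⟨h.2.1, h.1, h.2.2.1.symm, h.2.2.2.1.symm, h.2.2.2.2.2, h.2.2.2.2.1⟩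

private lemma gamma_trans {G : SimpleGraph V} {side : V → Bool} {a b c d e f : V}
    (h1 : Gamma G side a b c d) (h2 : Gamma G side c d e f) : Gamma G side a b e f := by
  obtain ⟨n, w, w', ⟨hs, hw, hw', hind⟩, hwa, hwb, hwc, hwd⟩ := h1
  obtain ⟨m, u, u', ⟨hs2, hu, hu', hind2⟩, hua, hub, huc, hud⟩ := h2
  have h0 : u 0 = w n := by rw [hua, hwc]
  have h0' : u' 0 = w' n := by rw [hub, hwd]
  refine ⟨n + m, wapp n w u, wapp n w' u', ⟨?_, ?_, ?_, ?_⟩, ?_, ?_, ?_, ?_⟩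
  · rw [wapp_left h0 (Nat.zero_le n), wapp_left h0' (Nat.zero_le n)]; exact hs
  · intro i hi
    rcases lt_or_ge i n with hlt | hge
    · rw [wapp_left h0 hlt.le, wapp_left h0 (by omega : i + 1 ≤ n)]; exact hw i hlt
    · rw [wapp_right w u hge, wapp_right w u (by omega : n ≤ i + 1),
        (by omega : i + 1 - n = (i - n) + 1)]
      exact hu (i - n) (by omega)
  · intro i hi
    rcases lt_or_ge i n with hlt | hge
    · rw [wapp_left h0' hlt.le, wapp_left h0' (by omega : i + 1 ≤ n)]; exact hw' i hlt
    · rw [wapp_right w' u' hge, wapp_right w' u' (by omega : n ≤ i + 1),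
        (by omega : i + 1 - n = (i - n) + 1)]
      exact hu' (i - n) (by omega)
  · intro i hi
    rcases lt_or_ge i n with hlt | hge
    · rw [wapp_left h0 hlt.le, wapp_left h0 (by omega : i + 1 ≤ n),
        wapp_left h0' hlt.le, wapp_left h0' (by omega : i + 1 ≤ n)]
      exact hind i hlt
    · rw [wapp_right w u hge, wapp_right w u (by omega : n ≤ i + 1),
        wapp_right w' u' hge, wapp_right w' u' (by omega : n ≤ i + 1),
        (by omega : i + 1 - n = (i - n) + 1)]
      exact hind2 (i - n) (by omega)
  · rw [wapp_left h0 (Nat.zero_le n)]; exact hwa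
  · rw [wapp_left h0' (Nat.zero_le n)]; exact hwb
  · rw [wapp_right w u (by omega : n ≤ n + m), (by omega : n + m - n = m)]; exact huc
  · rw [wapp_right w' u' (by omega : n ≤ n + m), (by omega : n + m - n = m)]; exact hud

private lemma gamma_swap {G : SimpleGraph V} {side : V → Bool} {a b c d : V}
    (h : Gamma G side a b c d) : Gamma G side b a d c := by
  obtain ⟨n, w, w', ⟨hs, hw, hw', hind⟩, h1, h2, h3, h4⟩ := h
  exact ⟨n, w', w, ⟨hs.symm, hw', hw, fun i hi => indep_swap (hind i hi)⟩, h2, h1, h4, h3⟩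

private lemma gamma_refl {G : SimpleGraph V} {side : V → Bool} {a b : V}
    (hs : side a = side b) : Gamma G side a b a b :=
  ⟨0, fun _ => a, fun _ => b,
    ⟨hs, fun i hi => absurd hi (by omega), fun i hi => absurd hi (by omega),
      fun i hi => absurd hi (by omega)⟩, rfl, rfl, rfl, rfl⟩

private lemma gamma_single {G : SimpleGraph V} {side : V → Bool} {a b c d : V}
    (h : Indep G a c b d) (hs : side a = side b) : Gamma G side a b c d := by
  refine ⟨1, fun i => if i = 0 then a else c, fun i => if i = 0 then b else d,
    ⟨by simpa using hs, ?_, ?_, ?_⟩, by simp, by simp, by simp, by simp⟩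
  · intro i hi
    have : i = 0 := by omega
    subst this; simpa using h.1
  · intro i hi
    have : i = 0 := by omega
    subst this; simpa using h.2.1
  · intro i hi
    have : i = 0 := by omega
    subst this; simpa using h

private lemma gamma_side {G : SimpleGraph V} {side : V → Bool}
    (hbip : IsBipartition G side) {a b f g : V}
    (h : Gamma G side a b f g) : side f = side g := by
  obtain ⟨n, w, w', ⟨hs, hw, hw', _⟩, _, _, h3, h4⟩ := h
  subst h3; subst h4
  have key : ∀ i ≤ n, side (w i) = side (w' i) := by
    intro i
    induction i with
    | zero => intro _; exact hs
    | succ j ih =>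
      intro hj
      have e1 := hbip _ _ (hw j (by omega))
      have e2 := hbip _ _ (hw' j (by omega))
      have e3 := ih (by omega)
      revert e1 e2 e3
      cases hA : side (w j) <;> cases hB : side (w' j) <;>
        cases hC : side (w (j+1)) <;> cases hD : side (w' (j+1)) <;> simp_all
  exact key n le_rfl

private lemma gamma_travel {G : SimpleGraph V} {side : V → Bool} {b b2 : V}
    (hb : G.Adj b b2) {n : ℕ} {w : ℕ → V} (hw : IsWalk G n w)
    (hav : ∀ j ≤ n, ¬ G.Adj (w j) b ∧ ¬ G.Adj (w j) b2)
    (hside : side (w 0) = side b) :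
    ∃ c, (c = b ∨ c = b2) ∧ Gamma G side (w 0) b (w n) c := by
  refine ⟨osc b b2 n, osc_mem b b2 n, n, w, osc b b2,
    ⟨by simpa [osc] using hside, hw, isWalk_osc hb n, ?_⟩, rfl, rfl, rfl, rfl⟩
  intro i hi
  have hoi := osc_mem b b2 i
  have hoi1 := osc_mem b b2 (i+1)
  have adjo : G.Adj (osc b b2 i) (osc b b2 (i+1)) := isWalk_osc hb n i hi
  have hvi := hav i hi.le
  have hvi1 := hav (i+1) hi
  refine ⟨hw i hi, adjo, ?_, ?_, ?_, ?_⟩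
  · intro he
    rcases hoi with hh | hh <;> rw [hh] at he
    · exact hvi.2 (he ▸ hb)
    · exact hvi.1 (he ▸ hb.symm)
  · intro he
    rcases hoi1 with hh | hh <;> rw [hh] at he
    · exact hvi1.2 (he ▸ hb)
    · exact hvi1.1 (he ▸ hb.symm)
  · intro he
    rcases hoi1 with hh | hh <;> rw [hh] at he
    · exact hvi.1 he
    · exact hvi.2 he
  · intro he
    rcases hoi with hh | hh <;> rw [hh] at he
    · exact hvi1.1 he.symm
    · exact hvi1.2 he.symm

private lemma gamma_travel2 {G : SimpleGraph V} {side : V → Bool} {b b2 : V}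
    (hb : G.Adj b b2) {n : ℕ} {w : ℕ → V} (hw : IsWalk G n w) (hn : 1 ≤ n)
    (hav : ∀ j ≤ n, ¬ G.Adj (w j) b ∧ ¬ G.Adj (w j) b2)
    {a : V} (hmem : a = w 0 ∨ a = w 1) (hside : side a = side b) :
    ∃ c, (c = b ∨ c = b2) ∧ Gamma G side a b (w n) c := by
  rcases hmem with hme | hme
  · subst hme; exact gamma_travel hb hw hav hside
  · subst hme
    have hadj : G.Adj (w 1) (w 0) := (hw 0 hn).symm
    have hw2 : IsWalk G (n+1) (wcons (w 1) w) := isWalk_wcons hadj hw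
    have hav2 : ∀ j ≤ n + 1, ¬ G.Adj (wcons (w 1) w j) b ∧ ¬ G.Adj (wcons (w 1) w j) b2 := by
      intro j hj
      cases j with
      | zero => rw [wcons_zero]; exact hav 1 hn
      | succ i => rw [wcons_succ]; exact hav i (by omega)
    have hside2 : side (wcons (w 1) w 0) = side b := by rw [wcons_zero]; exact hside
    obtain ⟨c, hc, hg⟩ := gamma_travel hb hw2 hav2 hside2
    rw [wcons_zero, wcons_succ] at hg
    exact ⟨c, hc, hg⟩

private lemma gamma_move {G : SimpleGraph V} {side : V → Bool} {k : ℕ}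
    {x y : ZMod (2*k+1) → V}
    (hadj : ∀ i, G.Adj (x i) (y i))
    (hast : ∀ i : ZMod (2*k+1), ∃ n, ∃ w : ℕ → V, IsWalk G n w ∧ 1 ≤ n ∧
      ((w 0 = x (i+k) ∧ w 1 = y (i+k)) ∨ (w 0 = y (i+k) ∧ w 1 = x (i+k))) ∧
      ((w (n-1) = y (i+k+1) ∧ w n = x (i+k+1)) ∨
        (w (n-1) = x (i+k+1) ∧ w n = y (i+k+1))) ∧
      ∀ j ≤ n, ¬ G.Adj (w j) (x i) ∧ ¬ G.Adj (w j) (y i))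
    (i : ZMod (2*k+1)) {a b : V}
    (ha : a = x (i+k) ∨ a = y (i+k)) (hb : b = x i ∨ b = y i)
    (hside : side a = side b) :
    ∃ a' b', (a' = x (i+k+1) ∨ a' = y (i+k+1)) ∧ (b' = x i ∨ b' = y i) ∧
      Gamma G side a b a' b' := by
  obtain ⟨n, w, hw, hn, hst, hen, hav⟩ := hast i
  have hmem : a = w 0 ∨ a = w 1 := by
    rcases hst with ⟨h0, h1⟩ | ⟨h0, h1⟩ <;> rcases ha with hae | hae
    · exact Or.inl (hae.trans h0.symm)
    · exact Or.inr (hae.trans h1.symm)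
    · exact Or.inr (hae.trans h1.symm)
    · exact Or.inl (hae.trans h0.symm)
  have hend : w n = x (i+k+1) ∨ w n = y (i+k+1) := by
    rcases hen with ⟨_, hh⟩ | ⟨_, hh⟩
    exacts [Or.inl hh, Or.inr hh]
  rcases hb with hbe | hbe
  · subst hbe
    obtain ⟨c, hc, hg⟩ := gamma_travel2 (hadj i) hw hn hav hmem hside
    exact ⟨w n, c, hend, hc, hg⟩
  · subst hbe
    obtain ⟨c, hc, hg⟩ := gamma_travel2 (hadj i).symm hw hn
      (fun j hj => ⟨(hav j hj).2, (hav j hj).1⟩) hmem hside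
    exact ⟨w n, c, hend, hc.symm, hg⟩

/-- if `G` contains an edge-asteroid, then `G` contains an invertible
pair. -/
theorem stmt_3 (G : SimpleGraph V) (side : V → Bool) (hbip : IsBipartition G side)
    (k : ℕ) (x y : ZMod (2*k+1) → V) (hx : ∀ i, side (x i) = true)
    (h : EdgeAsteroid G k x y) :
    ∃ u v, InvertiblePair G side u v := by
  classical
  obtain ⟨hk, hadj, hdist, hast⟩ := h
  have h0 : ((2*k+1 : ℕ) : ZMod (2*k+1)) = 0 := ZMod.natCast_self _
  have sideY : ∀ i : ZMod (2*k+1), side (y i) = false := by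
    intro i
    rcases Bool.eq_false_or_eq_true (side (y i)) with hh | hh
    · exact absurd ((hx i).trans hh.symm) (hbip _ _ (hadj i))
    · exact hh
  obtain ⟨n0, w0, hw0, hn0, hst0, hen0, hav0⟩ := hast 0
  rw [zero_add] at hst0
  have hxk0 : ¬ G.Adj (x ((k:ℕ) : ZMod (2*k+1))) (x 0) ∧
      ¬ G.Adj (x ((k:ℕ) : ZMod (2*k+1))) (y 0) := by
    rcases hst0 with ⟨h0', _⟩ | ⟨_, h1'⟩
    · exact h0' ▸ hav0 0 (by omega)
    · exact h1' ▸ hav0 1 hn0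
  have hyk0 : ¬ G.Adj (y ((k:ℕ) : ZMod (2*k+1))) (x 0) ∧
      ¬ G.Adj (y ((k:ℕ) : ZMod (2*k+1))) (y 0) := by
    rcases hst0 with ⟨_, h1'⟩ | ⟨h0', _⟩
    · exact h1' ▸ hav0 1 hn0
    · exact h0' ▸ hav0 0 (by omega)
  have hxne : x ((k:ℕ) : ZMod (2*k+1)) ≠ x 0 := by
    intro he; exact hxk0.2 (he ▸ hadj 0)
  have hyne : y ((k:ℕ) : ZMod (2*k+1)) ≠ y 0 := by
    intro he; exact hyk0.1 (he ▸ (hadj 0).symm)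
  have main : ∀ t : ℕ, t ≤ k → ∃ a b,
      (a = x ((k + t : ℕ) : ZMod (2*k+1)) ∨ a = y ((k + t : ℕ) : ZMod (2*k+1))) ∧
      (b = x ((t : ℕ) : ZMod (2*k+1)) ∨ b = y ((t : ℕ) : ZMod (2*k+1))) ∧
      Gamma G side (x ((k:ℕ) : ZMod (2*k+1))) (x 0) a b := by
    intro t
    induction t with
    | zero =>
      intro _
      refine ⟨x ((k:ℕ) : ZMod (2*k+1)), x 0, Or.inl (by norm_num), Or.inl (by norm_num),
        gamma_refl ((hx _).trans (hx _).symm)⟩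
    | succ t ih =>
      intro ht
      obtain ⟨a, b, ha, hb, hg⟩ := ih (by omega)
      have hsab : side a = side b := gamma_side hbip hg
      have c1 : ((t : ℕ) : ZMod (2*k+1)) + (k : ℕ) = ((k + t : ℕ) : ZMod (2*k+1)) := by
        push_cast; ring
      have c2 : ((t : ℕ) : ZMod (2*k+1)) + (k : ℕ) + 1 = ((k + (t+1) : ℕ) : ZMod (2*k+1)) := by
        push_cast; ring
      obtain ⟨a1, b1, ha1, hb1, hg1⟩ := gamma_move hadj hast ((t : ℕ) : ZMod (2*k+1))
        (by rw [c1]; exact ha) hb hsab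
      rw [c2] at ha1
      have hg2 := gamma_trans hg hg1
      have hs2 : side a1 = side b1 := gamma_side hbip hg2
      have d1 : ((k + t + 1 : ℕ) : ZMod (2*k+1)) + (k : ℕ) = ((t : ℕ) : ZMod (2*k+1)) := by
        push_cast at h0 ⊢; linear_combination h0
      have d2 : ((k + t + 1 : ℕ) : ZMod (2*k+1)) + (k : ℕ) + 1
          = ((t + 1 : ℕ) : ZMod (2*k+1)) := by
        push_cast at h0 ⊢; linear_combination h0
      obtain ⟨b2, a2, hb2, ha2, hg3⟩ := gamma_move hadj hast ((k + t + 1 : ℕ) : ZMod (2*k+1))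
        (by rw [d1]; exact hb1) (by exact ha1) hs2.symm
      rw [d2] at hb2
      exact ⟨a2, b2, by exact ha2, hb2, gamma_trans hg2 (gamma_swap hg3)⟩
  obtain ⟨a, b, ha, hb, hg⟩ := main k le_rfl
  have e1 : ((k : ℕ) : ZMod (2*k+1)) + (k : ℕ) = ((k + k : ℕ) : ZMod (2*k+1)) := by
    push_cast; ring
  have e2 : ((k : ℕ) : ZMod (2*k+1)) + (k : ℕ) + 1 = 0 := by
    push_cast at h0 ⊢; linear_combination h0
  obtain ⟨a1, b1, ha1, hb1, hg1⟩ := gamma_move hadj hast ((k : ℕ) : ZMod (2*k+1))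
    (by rw [e1]; exact ha) hb (gamma_side hbip hg)
  rw [e2] at ha1
  have hg2 := gamma_trans hg hg1
  have hs2 : side a1 = side b1 := gamma_side hbip hg2
  refine ⟨x ((k:ℕ) : ZMod (2*k+1)), x 0, hxne, ?_⟩
  rcases ha1 with h1 | h1 <;> rcases hb1 with h2 | h2 <;> subst h1 <;> subst h2
  · exact hg2
  · rw [hx 0, sideY _] at hs2; exact absurd hs2 (by simp)
  · rw [sideY 0, hx _] at hs2; exact absurd hs2 (by simp)
  · have hind : Indep G (y 0) (x 0) (y ((k:ℕ) : ZMod (2*k+1))) (x ((k:ℕ) : ZMod (2*k+1))) :=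
      ⟨(hadj 0).symm, (hadj _).symm, hyne.symm, hxne.symm,
        fun hh => hxk0.2 hh.symm, hyk0.1⟩
    exact gamma_trans hg2 (gamma_single hind ((sideY 0).trans (sideY _).symm))

end CocompBigraph
end

section
/- If there exist congruent walks from a to f and from b to g in a bipartite graph, then there exist standard congruent walks from a to f and from b to g (where a pair of congruent walks a_1...a_k, b_1...b_k is standard if for each i = 1,...,k−2, a_i = a_{i+2} or b_i = b_{i+2}). -/
namespace CocompBigraph

variable {V : Type*}

private lemma standardize (G : SimpleGraph V) (side : V → Bool) :
    ∀ n (w w' : ℕ → V), CongWalks G side n w w' →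
      ∃ m, ∃ v v' : ℕ → V, CongWalks G side m v v' ∧
        v 0 = w 0 ∧ v' 0 = w' 0 ∧ v m = w n ∧ v' m = w' n ∧
        ∀ i, i + 2 ≤ m → (v i = v (i+2) ∨ v' i = v' (i+2)) := by
  intro n
  induction n with
  | zero =>
    intro w w' hc
    exact ⟨0, w, w', hc, rfl, rfl, rfl, rfl, fun i hi => by omega⟩
  | succ n ih =>
    intro w w' hc
    obtain ⟨hside, hw, hw', hind⟩ := hc
    obtain ⟨m, u, u', hu, h0, h0', hm, hm', hstd⟩ :=
      ih w w' ⟨hside, fun i hi => hw i (by omega), fun i hi => hw' i (by omega),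
        fun i hi => hind i (by omega)⟩
    have hlast : Indep G (u m) (w (n+1)) (u' m) (w' (n+1)) := by
      rw [hm, hm']; exact hind n (by omega)
    by_cases hA : m = 0 ∨ u (m-1) = w (n+1) ∨ u' (m-1) = w' (n+1)
    · -- just append the last step
      set v : ℕ → V := fun i => if i ≤ m then u i else w (n+1) with hvdef
      set v' : ℕ → V := fun i => if i ≤ m then u' i else w' (n+1) with hv'def
      have hv : ∀ i ≤ m, v i = u i := fun i hi => if_pos hi
      have hv1 : v (m+1) = w (n+1) := if_neg (by omega)
      have hv' : ∀ i ≤ m, v' i = u' i := fun i hi => if_pos hi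
      have hv'1 : v' (m+1) = w' (n+1) := if_neg (by omega)
      refine ⟨m+1, v, v', ⟨?_, ?_, ?_, ?_⟩, ?_, ?_, ?_, ?_, ?_⟩
      · rw [hv 0 (by omega), hv' 0 (by omega)]; exact hu.1
      · intro i hi
        rcases Nat.lt_or_ge i m with h | h
        · rw [hv i (by omega), hv (i+1) (by omega)]; exact hu.2.1 i h
        · have h2 : i = m := by omega
          rw [h2, hv m le_rfl, hv1]; exact hlast.1
      · intro i hi
        rcases Nat.lt_or_ge i m with h | h
        · rw [hv' i (by omega), hv' (i+1) (by omega)]; exact hu.2.2.1 i h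
        · have h2 : i = m := by omega
          rw [h2, hv' m le_rfl, hv'1]; exact hlast.2.1
      · intro i hi
        rcases Nat.lt_or_ge i m with h | h
        · rw [hv i (by omega), hv (i+1) (by omega), hv' i (by omega), hv' (i+1) (by omega)]
          exact hu.2.2.2 i h
        · have h2 : i = m := by omega
          rw [h2, hv m le_rfl, hv1, hv' m le_rfl, hv'1]; exact hlast
      · rw [hv 0 (by omega)]; exact h0
      · rw [hv' 0 (by omega)]; exact h0'
      · rw [hv1]
      · rw [hv'1]
      · intro i hi
        rcases Nat.lt_or_ge (i+2) (m+1) with h | h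
        · have h1 : i + 2 ≤ m := by omega
          rcases hstd i h1 with h2 | h2
          · left; rw [hv i (by omega), hv (i+2) h1]; exact h2
          · right; rw [hv' i (by omega), hv' (i+2) h1]; exact h2
        · have him : i = m - 1 := by omega
          have hm1 : 1 ≤ m := by omega
          have hi2 : i + 2 = m + 1 := by omega
          rcases hA with h | h | h
          · omega
          · left; rw [hv i (by omega), hi2, hv1, him]; exact h
          · right; rw [hv' i (by omega), hi2, hv'1, him]; exact h
    · -- insert the backtracking gadget
      push_neg at hA
      obtain ⟨hm0, hne1, hne2⟩ := hA
      obtain ⟨k, rfl⟩ : ∃ k, m = k + 1 := ⟨m - 1, by omega⟩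
      simp only [Nat.add_sub_cancel] at hne1 hne2
      have hstep : Indep G (u k) (u (k+1)) (u' k) (u' (k+1)) := hu.2.2.2 k (by omega)
      have ha2b0 : w (n+1) ≠ u' k := by
        intro h
        exact hlast.2.2.2.2.2 (h ▸ hstep.2.1.symm)
      set v : ℕ → V := fun i => if i ≤ k+1 then u i else if i = k+3 then u (k+1) else w (n+1)
        with hvdef
      set v' : ℕ → V := fun i => if i ≤ k+1 then u' i
        else if i = k+2 then u' k else if i = k+3 then u' (k+1) else w' (n+1) with hv'def
      have hv : ∀ i ≤ k+1, v i = u i := fun i hi => if_pos hi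
      have hv2 : v (k+2) = w (n+1) := by
        show (if k+2 ≤ k+1 then u (k+2) else if k+2 = k+3 then u (k+1) else w (n+1)) = _
        rw [if_neg (by omega), if_neg (by omega)]
      have hv3 : v (k+3) = u (k+1) := by
        show (if k+3 ≤ k+1 then u (k+3) else if k+3 = k+3 then u (k+1) else w (n+1)) = _
        rw [if_neg (by omega), if_pos rfl]
      have hv4 : v (k+4) = w (n+1) := by
        show (if k+4 ≤ k+1 then u (k+4) else if k+4 = k+3 then u (k+1) else w (n+1)) = _
        rw [if_neg (by omega), if_neg (by omega)]
      have hv' : ∀ i ≤ k+1, v' i = u' i := fun i hi => if_pos hi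
      have hv'2 : v' (k+2) = u' k := by
        show (if k+2 ≤ k+1 then u' (k+2) else if k+2 = k+2 then u' k
          else if k+2 = k+3 then u' (k+1) else w' (n+1)) = _
        rw [if_neg (by omega), if_pos rfl]
      have hv'3 : v' (k+3) = u' (k+1) := by
        show (if k+3 ≤ k+1 then u' (k+3) else if k+3 = k+2 then u' k
          else if k+3 = k+3 then u' (k+1) else w' (n+1)) = _
        rw [if_neg (by omega), if_neg (by omega), if_pos rfl]
      have hv'4 : v' (k+4) = w' (n+1) := by
        show (if k+4 ≤ k+1 then u' (k+4) else if k+4 = k+2 then u' k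
          else if k+4 = k+3 then u' (k+1) else w' (n+1)) = _
        rw [if_neg (by omega), if_neg (by omega), if_neg (by omega)]
      refine ⟨k+4, v, v', ⟨?_, ?_, ?_, ?_⟩, ?_, ?_, ?_, ?_, ?_⟩
      · rw [hv 0 (by omega), hv' 0 (by omega)]; exact hu.1
      · intro i hi
        rcases Nat.lt_or_ge i (k+1) with h | h
        · rw [hv i (by omega), hv (i+1) (by omega)]
          exact hu.2.1 i h
        · have : i = k+1 ∨ i = k+2 ∨ i = k+3 := by omega
          rcases this with rfl | rfl | rfl
          · rw [hv (k+1) le_rfl, hv2]; exact hlast.1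
          · rw [show k+2+1 = k+3 from rfl, hv2, hv3]; exact hlast.1.symm
          · rw [show k+3+1 = k+4 from rfl, hv3, hv4]; exact hlast.1
      · intro i hi
        rcases Nat.lt_or_ge i (k+1) with h | h
        · rw [hv' i (by omega), hv' (i+1) (by omega)]
          exact hu.2.2.1 i h
        · have : i = k+1 ∨ i = k+2 ∨ i = k+3 := by omega
          rcases this with rfl | rfl | rfl
          · rw [hv' (k+1) le_rfl, hv'2]; exact hstep.2.1.symm
          · rw [show k+2+1 = k+3 from rfl, hv'2, hv'3]; exact hstep.2.1
          · rw [show k+3+1 = k+4 from rfl, hv'3, hv'4]; exact hlast.2.1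
      · intro i hi
        rcases Nat.lt_or_ge i (k+1) with h | h
        · rw [hv i (by omega), hv (i+1) (by omega), hv' i (by omega), hv' (i+1) (by omega)]
          exact hu.2.2.2 i h
        · have : i = k+1 ∨ i = k+2 ∨ i = k+3 := by omega
          rcases this with rfl | rfl | rfl
          · rw [hv (k+1) le_rfl, hv2, hv' (k+1) le_rfl, hv'2]
            exact ⟨hlast.1, hstep.2.1.symm, hlast.2.2.1,
              ha2b0, fun hadj => hstep.2.2.2.2.2 hadj.symm, hlast.2.2.2.2.2⟩
          · rw [show k+2+1 = k+3 from rfl, hv2, hv3, hv'2, hv'3]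
            exact ⟨hlast.1.symm, hstep.2.1, ha2b0, hstep.2.2.2.1,
              fun hadj => hlast.2.2.2.2.2 hadj.symm, hstep.2.2.2.2.2⟩
          · rw [show k+3+1 = k+4 from rfl, hv3, hv4, hv'3, hv'4]
            exact hlast
      · rw [hv 0 (by omega)]; exact h0
      · rw [hv' 0 (by omega)]; exact h0'
      · rw [hv4]
      · rw [hv'4]
      · intro i hi
        rcases Nat.lt_or_ge (i+2) (k+2) with h | h
        · have h1 : i + 2 ≤ k + 1 := by omega
          rcases hstd i h1 with h2 | h2
          · left; rw [hv i (by omega), hv (i+2) h1]; exact h2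
          · right; rw [hv' i (by omega), hv' (i+2) h1]; exact h2
        · have : i = k ∨ i = k+1 ∨ i = k+2 := by omega
          rcases this with h2 | rfl | rfl
          · right; rw [h2, hv' k (by omega), show k+2 = k+2 from rfl, hv'2]
          · left; rw [hv (k+1) le_rfl, show k+1+2 = k+3 from rfl, hv3]
          · left; rw [hv2, show k+2+2 = k+4 from rfl, hv4]

/-- if there are congruent walks from `a` to `f` and from `b` to `g`,
then there are standard such congruent walks (for every `i`, `w i = w (i+2)` or
`w' i = w' (i+2)`). -/
theorem stmt_7 (G : SimpleGraph V) (side : V → Bool) (hbip : IsBipartition G side)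
    (a b f g : V) (h : Gamma G side a b f g) :
    ∃ n, ∃ w w' : ℕ → V, CongWalks G side n w w' ∧
      w 0 = a ∧ w' 0 = b ∧ w n = f ∧ w' n = g ∧
      ∀ i, i + 2 ≤ n → (w i = w (i+2) ∨ w' i = w' (i+2)) := by
  obtain ⟨n, w, w', hc, ha, hb, hf, hg⟩ := h
  obtain ⟨m, v, v', hv, h0, h0', hm, hm', hstd⟩ := standardize G side n w w' hc
  exact ⟨m, v, v', hv, by rw [h0, ha], by rw [h0', hb], by rw [hm, hf], by rw [hm', hg], hstd⟩


end CocompBigraph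
end

section
/- Let a_1...a_k and b_1...b_k be congruent walks (with k odd, starting in X and ending in Y) in a bipartite graph G. Let C_X be the set of all walk vertices lying in X and C_Y those lying in Y. Suppose c_1 ∈ X, c_2 ∈ Y satisfy: c_1c_2 ∈ E(G), c_1 is not adjacent to any vertex of C_Y, and c_2 is not adjacent to any vertex of C_X. Then (a_1, c_1) Γ (a_k, c_1) and (c_1, b_1) Γ (c_1, b_k). -/
namespace CocompBigraph

variable {V : Type*}

lemma congWalks_symm {G : SimpleGraph V} {side : V → Bool} {n : ℕ} {w w' : ℕ → V}
    (h : CongWalks G side n w w') : CongWalks G side n w' w := by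
  obtain ⟨h0, hw, hw', hi⟩ := h
  refine ⟨h0.symm, hw', hw, fun i hin => ?_⟩
  obtain ⟨a1, a2, a3, a4, a5, a6⟩ := hi i hin
  exact ⟨a2, a1, a3.symm, a4.symm, a6, a5⟩

lemma cong_with_const {G : SimpleGraph V} {side : V → Bool} (hbip : IsBipartition G side)
    {n : ℕ} {u : ℕ → V} (hu : IsWalk G n u) (hu0 : side (u 0) = true)
    {c1 c2 : V} (hc1 : side c1 = true) (hadj : G.Adj c1 c2)
    (h1 : ∀ i ≤ n, side (u i) = false → ¬ G.Adj c1 (u i))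
    (h2 : ∀ i ≤ n, side (u i) = true → ¬ G.Adj c2 (u i)) :
    CongWalks G side n u (fun i => if Even i then c1 else c2) := by
  set v : ℕ → V := fun i => if Even i then c1 else c2 with hv
  -- parity of sides along u
  have hpar : ∀ i ≤ n, side (u i) = decide (Even i) := by
    intro i
    induction i with
    | zero => intro _; simpa using hu0
    | succ k ih =>
      intro hk
      have hk' : k ≤ n := Nat.le_of_succ_le hk
      have hne := hbip _ _ (hu k hk)
      have hk2 := ih hk'
      rw [hk2] at hne
      rcases Bool.eq_false_or_eq_true (side (u (k+1))) with h | h <;>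
        simp_all [Nat.even_add_one]
  have hvwalk : IsWalk G n v := by
    intro i hi
    by_cases hev : Even i
    · simp only [hv, if_pos hev, Nat.even_add_one, hev, not_true, if_neg, if_false]
      exact hadj
    · simp only [hv, if_neg hev, Nat.even_add_one, hev, not_false_iff, if_pos]
      exact hadj.symm
  have hne : ∀ i, i ≤ n → 0 < n → u i ≠ v i := by
    intro i hin hn heq
    simp only [hv] at heq
    rcases lt_or_eq_of_le hin with hlt | rfl
    · by_cases hev : Even i
      · rw [if_pos hev] at heq
        have ha : G.Adj c1 (u (i+1)) := heq ▸ hu i hlt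
        exact h1 (i+1) hlt (by rw [hpar (i+1) hlt]; simp [Nat.even_add_one, hev]) ha
      · rw [if_neg hev] at heq
        have ha : G.Adj c2 (u (i+1)) := heq ▸ hu i hlt
        exact h2 (i+1) hlt (by rw [hpar (i+1) hlt]; simp [Nat.even_add_one, hev]) ha
    · have hedge := hu (i-1) (by omega)
      rw [show i - 1 + 1 = i by omega, heq] at hedge
      by_cases hev : Even i
      · rw [if_pos hev] at hedge
        have hodd : ¬ Even (i-1) := by
          intro h; rcases h with ⟨m, hm⟩; rcases hev with ⟨p, hp⟩; omega
        exact h1 (i-1) (by omega) (by rw [hpar (i-1) (by omega)]; simp [hodd]) hedge.symm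
      · rw [if_neg hev] at hedge
        have hev1 : Even (i-1) := by
          rcases Nat.even_or_odd i with h | h
          · exact absurd h hev
          · rcases h with ⟨m, hm⟩; exact ⟨m, by omega⟩
        exact h2 (i-1) (by omega) (by rw [hpar (i-1) (by omega)]; simp [hev1]) hedge.symm
  refine ⟨?_, hu, hvwalk, fun i hi => ?_⟩
  · simp [hv, hu0, hc1]
  have hn : 0 < n := by omega
  refine ⟨hu i hi, hvwalk i hi, hne i (le_of_lt hi) hn, hne (i+1) hi hn, ?_, ?_⟩
  · by_cases hev : Even i
    · have : v (i+1) = c2 := by simp [hv, Nat.even_add_one, hev]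
      rw [this]
      intro ha
      exact h2 i (le_of_lt hi) (by rw [hpar i (le_of_lt hi)]; simp [hev]) ha.symm
    · have : v (i+1) = c1 := by simp [hv, Nat.even_add_one, hev]
      rw [this]
      intro ha
      exact h1 i (le_of_lt hi) (by rw [hpar i (le_of_lt hi)]; simp [hev]) ha.symm
  · by_cases hev : Even i
    · have : v i = c1 := if_pos hev
      rw [this]
      exact h1 (i+1) hi (by rw [hpar (i+1) hi]; simp [Nat.even_add_one, hev])
    · have : v i = c2 := if_neg hev
      rw [this]
      exact h2 (i+1) hi (by rw [hpar (i+1) hi]; simp [Nat.even_add_one, hev])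

/-- (first case of Proposition 3.1) if `c₁c₂ ∈ E(G)`, `c₁` is adjacent
to no walk vertex on side `Y` and `c₂` to no walk vertex on side `X`, then
`(a₁,c₁) Γ (a_k,c₁)` and `(c₁,b₁) Γ (c₁,b_k)`. -/
theorem stmt_8 (G : SimpleGraph V) (side : V → Bool) (hbip : IsBipartition G side)
    (n : ℕ) (w w' : ℕ → V) (hcong : CongWalks G side n w w')
    (hstart : side (w 0) = true) (heven : Even n)
    (c1 c2 : V) (hc1 : side c1 = true) (hc2 : side c2 = false)
    (hadj : G.Adj c1 c2)
    (h1 : ∀ i ≤ n, side (w i) = false → ¬ G.Adj c1 (w i))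
    (h1' : ∀ i ≤ n, side (w' i) = false → ¬ G.Adj c1 (w' i))
    (h2 : ∀ i ≤ n, side (w i) = true → ¬ G.Adj c2 (w i))
    (h2' : ∀ i ≤ n, side (w' i) = true → ¬ G.Adj c2 (w' i)) :
    Gamma G side (w 0) c1 (w n) c1 ∧ Gamma G side c1 (w' 0) c1 (w' n) := by
  obtain ⟨h0, hw, hw', hind⟩ := hcong
  have hstart' : side (w' 0) = true := by rw [← h0]; exact hstart
  have cw1 := cong_with_const hbip hw hstart hc1 hadj h1 h2
  have cw2 := cong_with_const hbip hw' hstart' hc1 hadj h1' h2'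
  constructor
  · exact ⟨n, w, _, cw1, rfl, by simp, rfl, if_pos heven⟩
  · exact ⟨n, _, w', congWalks_symm cw2, by simp, rfl, if_pos heven, rfl⟩

end CocompBigraph
end

section
/- Let a_1...a_k and b_1...b_k be congruent walks (k odd, starting in X, ending in Y) in a bipartite graph G, with C_X, C_Y the sets of walk vertices in X, Y respectively. Suppose c_1 ∈ X, c_2 ∈ Y satisfy: c_1c_2 ∉ E(G), c_1 is adjacent to every vertex of C_Y, and c_2 is adjacent to every vertex of C_X. Then (a_1, c_1) Γ (a_k, c_1) and (c_1, b_1) Γ (c_1, b_k). -/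
namespace CocompBigraph

variable {V : Type*}

/-- (second case of Proposition 3.1) if `c₁c₂ ∉ E(G)`, `c₁` is adjacent
to every walk vertex on side `Y` and `c₂` to every walk vertex on side `X`, then
`(a₁,c₁) Γ (a_k,c₁)` and `(c₁,b₁) Γ (c₁,b_k)`. -/
theorem stmt_9 (G : SimpleGraph V) (side : V → Bool) (hbip : IsBipartition G side)
    (n : ℕ) (w w' : ℕ → V) (hcong : CongWalks G side n w w')
    (hstart : side (w 0) = true) (heven : Even n)
    (c1 c2 : V) (hc1 : side c1 = true) (hc2 : side c2 = false)
    (hadj : ¬ G.Adj c1 c2)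
    (h1 : ∀ i ≤ n, side (w i) = false → G.Adj c1 (w i))
    (h1' : ∀ i ≤ n, side (w' i) = false → G.Adj c1 (w' i))
    (h2 : ∀ i ≤ n, side (w i) = true → G.Adj c2 (w i))
    (h2' : ∀ i ≤ n, side (w' i) = true → G.Adj c2 (w' i)) :
    Gamma G side (w 0) c1 (w n) c1 ∧ Gamma G side c1 (w' 0) c1 (w' n) := by
  obtain ⟨hside0, hw, hw', hind⟩ := hcong
  -- parity of sides along a walk
  have key : ∀ (u : ℕ → V), IsWalk G n u → side (u 0) = true →
      ∀ i, i ≤ n → (side (u i) = true ↔ Even i) := by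
    intro u hu h0 i
    induction i with
    | zero => intro _; simp [h0]
    | succ i ih =>
      intro hle
      have hle' : i ≤ n := Nat.le_of_succ_le hle
      have hne := hbip _ _ (hu i (Nat.lt_of_succ_le hle))
      have hiu := ih hle'
      rw [Nat.even_add_one, ← hiu]
      cases h : side (u i) <;> cases h' : side (u (i+1)) <;> simp_all
  have hstart' : side (w' 0) = true := hside0 ▸ hstart
  have keyw := key w hw hstart
  have keyw' := key w' hw' hstart'
  -- adjacency helpers
  have hA1 : ∀ i ≤ n, ¬ Even i → G.Adj c1 (w i) := by
    intro i hi ho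
    cases h : side (w i) with
    | false => exact h1 i hi h
    | true => exact absurd ((keyw i hi).mp h) ho
  have hA1' : ∀ i ≤ n, ¬ Even i → G.Adj c1 (w' i) := by
    intro i hi ho
    cases h : side (w' i) with
    | false => exact h1' i hi h
    | true => exact absurd ((keyw' i hi).mp h) ho
  have hA2 : ∀ i ≤ n, Even i → G.Adj c2 (w i) := by
    intro i hi he; exact h2 i hi ((keyw i hi).mpr he)
  have hA2' : ∀ i ≤ n, Even i → G.Adj c2 (w' i) := by
    intro i hi he; exact h2' i hi ((keyw' i hi).mpr he)
  -- distinctness helpers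
  have hne1 : ∀ i ≤ n, Even i → w i ≠ c1 := by
    intro i hi he heq
    exact hadj ((heq ▸ hA2 i hi he).symm)
  have hne1' : ∀ i ≤ n, Even i → w' i ≠ c1 := by
    intro i hi he heq
    exact hadj ((heq ▸ hA2' i hi he).symm)
  have hne2 : ∀ i ≤ n, ¬ Even i → w i ≠ c2 := by
    intro i hi ho heq
    exact hadj (heq ▸ hA1 i hi ho)
  have hne2' : ∀ i ≤ n, ¬ Even i → w' i ≠ c2 := by
    intro i hi ho heq
    exact hadj (heq ▸ hA1' i hi ho)
  constructor
  · -- walks: W i = w i / c2, U i = c1 / w' i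
    refine ⟨n, (fun i => if Even i then w i else c2),
      (fun i => if Even i then c1 else w' i), ⟨?_, ?_, ?_, ?_⟩, ?_, ?_, ?_, ?_⟩
    · simp [hstart, hc1]
    · intro i hi
      by_cases he : Even i
      · have : ¬ Even (i+1) := by simp [Nat.even_add_one, he]
        simp only [if_pos he, if_neg this]
        exact (hA2 i hi.le he).symm
      · have h2e : Even (i+1) := by simpa [Nat.even_add_one] using he
        simp only [if_neg he, if_pos h2e]
        exact hA2 (i+1) hi h2e
    · intro i hi
      by_cases he : Even i
      · have : ¬ Even (i+1) := by simp [Nat.even_add_one, he]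
        simp only [if_pos he, if_neg this]
        exact hA1' (i+1) hi this
      · have h2e : Even (i+1) := by simpa [Nat.even_add_one] using he
        simp only [if_neg he, if_pos h2e]
        exact (hA1' i hi.le he).symm
    · intro i hi
      obtain ⟨ha, hb, hcne, hd, he5, hf⟩ := hind i hi
      by_cases he : Even i
      · have ho : ¬ Even (i+1) := by simp [Nat.even_add_one, he]
        simp only [if_pos he, if_neg ho]
        exact ⟨(hA2 i hi.le he).symm, hA1' (i+1) hi ho,
          hne1 i hi.le he, fun hq => hne2' (i+1) hi ho hq.symm,
          he5, hadj⟩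
      · have h2e : Even (i+1) := by simpa [Nat.even_add_one] using he
        simp only [if_neg he, if_pos h2e]
        exact ⟨hA2 (i+1) hi h2e, (hA1' i hi.le he).symm,
          fun hq => hne2' i hi.le he hq.symm, hne1 (i+1) hi h2e,
          hadj ∘ G.adj_symm, hf⟩
    · simp
    · simp
    · simp [heven]
    · simp [heven]
  · -- walks: W i = c1 / w i, U i = w' i / c2
    refine ⟨n, (fun i => if Even i then c1 else w i),
      (fun i => if Even i then w' i else c2), ⟨?_, ?_, ?_, ?_⟩, ?_, ?_, ?_, ?_⟩
    · simp [hstart', hc1]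
    · intro i hi
      by_cases he : Even i
      · have ho : ¬ Even (i+1) := by simp [Nat.even_add_one, he]
        simp only [if_pos he, if_neg ho]
        exact hA1 (i+1) hi ho
      · have h2e : Even (i+1) := by simpa [Nat.even_add_one] using he
        simp only [if_neg he, if_pos h2e]
        exact (hA1 i hi.le he).symm
    · intro i hi
      by_cases he : Even i
      · have ho : ¬ Even (i+1) := by simp [Nat.even_add_one, he]
        simp only [if_pos he, if_neg ho]
        exact (hA2' i hi.le he).symm
      · have h2e : Even (i+1) := by simpa [Nat.even_add_one] using he
        simp only [if_neg he, if_pos h2e]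
        exact hA2' (i+1) hi h2e
    · intro i hi
      obtain ⟨ha, hb, hcne, hd, he5, hf⟩ := hind i hi
      by_cases he : Even i
      · have ho : ¬ Even (i+1) := by simp [Nat.even_add_one, he]
        simp only [if_pos he, if_neg ho]
        exact ⟨hA1 (i+1) hi ho, (hA2' i hi.le he).symm,
          fun hq => hne1' i hi.le he hq.symm, hne2 (i+1) hi ho,
          hadj, hf⟩
      · have h2e : Even (i+1) := by simpa [Nat.even_add_one] using he
        simp only [if_neg he, if_pos h2e]
        exact ⟨(hA1 i hi.le he).symm, hA2' (i+1) hi h2e,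
          hne2 i hi.le he, fun hq => hne1' (i+1) hi h2e hq.symm,
          he5, hadj ∘ G.adj_symm⟩
    · simp
    · simp
    · simp [heven]
    · simp [heven]

end CocompBigraph
end

section
/- In a bipartite graph G with bipartition (X,Y), for any distinct vertices a, b, c ∈ X: if (a,b) and (a,c) are relevant pairs lying in different implication classes, then (c,b) is relevant. -/
namespace CocompBigraph

variable {V : Type*}

/-- A single pair of independent edges starting at `c` and `b` makes `(c,b)` relevant. -/
lemma relevant_of_step (G : SimpleGraph V) (side : V → Bool) {c b p q : V}
    (hside : side c = side b) (h : Indep G c p b q) : Relevant G side c b := by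
  refine ⟨p, q, ⟨1, (fun i => match i with | 0 => c | _ => p),
    (fun i => match i with | 0 => b | _ => q), ⟨hside, ?_, ?_, ?_⟩, rfl, rfl, rfl, rfl⟩, ?_⟩
  · intro i hi
    interval_cases i
    exact h.1
  · intro i hi
    interval_cases i
    exact h.2.1
  · intro i hi
    interval_cases i
    exact h
  · intro hpq
    have : p = c := congrArg Prod.fst hpq
    exact G.irrefl (this ▸ h.1)

/-- Two independent steps `(a,b) → (p,q) → (a,c)` give `(a,b) Γ (a,c)`. -/
lemma gamma_two (G : SimpleGraph V) (side : V → Bool) {a b c p q : V}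
    (hside : side a = side b)
    (h1 : Indep G a p b q) (h2 : Indep G p a q c) : Gamma G side a b a c := by
  refine ⟨2, (fun i => match i with | 0 => a | 1 => p | _ => a),
    (fun i => match i with | 0 => b | 1 => q | _ => c), ⟨hside, ?_, ?_, ?_⟩,
    rfl, rfl, rfl, rfl⟩
  · intro i hi
    interval_cases i
    · exact h1.1
    · exact h2.1
  · intro i hi
    interval_cases i
    · exact h1.2.1
    · exact h2.2.1
  · intro i hi
    interval_cases i
    · exact h1
    · exact h2

/-- A relevant pair admits a first independent step. -/
lemma relevant_first_step (G : SimpleGraph V) (side : V → Bool) {a b : V}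
    (h : Relevant G side a b) : ∃ y y', Indep G a y b y' := by
  obtain ⟨f, g, ⟨n, w, w', ⟨hside, hw, hw', hind⟩, h0, h0', hn, hn'⟩, hne⟩ := h
  rcases Nat.eq_zero_or_pos n with hn0 | hn0
  · exfalso
    apply hne
    subst hn0
    rw [← hn, ← hn', h0, h0']
  · have := hind 0 hn0
    rw [h0, h0'] at this
    exact ⟨w 1, w' 1, this⟩

/-- for distinct `a, b, c` on side `X`, if `(a,b)` and `(a,c)` are
relevant and lie in different implication classes, then `(c,b)` is relevant. -/
theorem stmt_10 (G : SimpleGraph V) (side : V → Bool) (hbip : IsBipartition G side)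
    (a b c : V) (ha : side a = true) (hb : side b = true) (hc : side c = true)
    (hab : a ≠ b) (hac : a ≠ c) (hbc : b ≠ c)
    (h1 : Relevant G side a b) (h2 : Relevant G side a c)
    (h3 : ¬ Gamma G side a b a c) :
    Relevant G side c b := by
  obtain ⟨y, y', ⟨E1, E2, _, hyy', N1, N2⟩⟩ := relevant_first_step G side h1
  obtain ⟨z, z', ⟨E3, E4, _, hzz', N3, N4⟩⟩ := relevant_first_step G side h2
  have hsab : side a = side b := ha.trans hb.symm
  have hscb : side c = side b := hc.trans hb.symm
  by_cases hcy' : G.Adj c y'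
  · by_cases hcy : G.Adj c y
    · by_cases hbz : G.Adj b z
      · -- Relevant via edges (c,y), (b,z)
        have hyz : y ≠ z := fun h => N2 (h ▸ hbz)
        exact relevant_of_step G side hscb ⟨hcy, hbz, hbc.symm, hyz, N4, N2⟩
      · -- contradiction : (a,b) → (z,y') → (a,c)
        exfalso
        have hzy' : z ≠ y' := fun h => N1 (h ▸ E3)
        exact h3 (gamma_two G side hsab
          ⟨E3, E2, hab, hzy', N1, hbz⟩
          ⟨E3.symm, hcy'.symm, hzy', hac, fun h => N4 h.symm, fun h => N1 h.symm⟩)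
    · -- contradiction : (a,b) → (y,y') → (a,c)
      exfalso
      exact h3 (gamma_two G side hsab
        ⟨E1, E2, hab, hyy', N1, N2⟩
        ⟨E1.symm, hcy'.symm, hyy', hac, fun h => hcy h.symm, fun h => N1 h.symm⟩)
  · by_cases hbz' : G.Adj b z'
    · by_cases hbz : G.Adj b z
      · by_cases hcy : G.Adj c y
        · -- Relevant via edges (c,y), (b,z)
          have hyz : y ≠ z := fun h => N4 (h ▸ hcy)
          exact relevant_of_step G side hscb ⟨hcy, hbz, hbc.symm, hyz, N4, N2⟩
        · -- contradiction : (a,b) → (y,z') → (a,c)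
          exfalso
          have hyz' : y ≠ z' := fun h => N3 (h ▸ E1)
          exact h3 (gamma_two G side hsab
            ⟨E1, hbz', hab, hyz', N3, N2⟩
            ⟨E1.symm, E4.symm, hyz', hac, fun h => hcy h.symm, fun h => N3 h.symm⟩)
      · -- contradiction : (a,b) → (z,z') → (a,c)
        exfalso
        exact h3 (gamma_two G side hsab
          ⟨E3, hbz', hab, hzz', N3, hbz⟩
          ⟨E3.symm, E4.symm, hzz', hac, fun h => N4 h.symm, fun h => N3 h.symm⟩)
    · -- Relevant via edges (c,z'), (b,y')
      have hz'y' : z' ≠ y' := fun h => hcy' (h ▸ E4)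
      exact relevant_of_step G side hscb ⟨E4, E2, hbc.symm, hz'y', hcy', hbz'⟩

end CocompBigraph
end

section
/- In a bipartite graph G with bipartition (X,Y), suppose a,b,c,d ∈ X with (a,b) Γ (c,d), and at least one of (a,c), (c,b) is a relevant pair. Then (a,c) Γ (a,b) or (c,b) Γ (a,b). -/
namespace CocompBigraph

variable {V : Type*}

section TriangleLemmaAux

variable {G : SimpleGraph V} {side : V → Bool}

lemma nadj_symm {x y : V} (h : ¬ G.Adj x y) : ¬ G.Adj y x := fun h' => h h'.symm

lemma indep_rev {x y x' y' : V} (h : Indep G x y x' y') : Indep G y x y' x' :=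
  ⟨h.1.symm, h.2.1.symm, h.2.2.2.1, h.2.2.1, nadj_symm h.2.2.2.2.2, nadj_symm h.2.2.2.2.1⟩

lemma side_flip (hbip : IsBipartition G side) {x y : V} (h : G.Adj x y) :
    side y = !side x := by
  have := hbip x y h
  cases hx : side x <;> cases hy : side y <;> simp_all

lemma cong_side (hbip : IsBipartition G side) {n : ℕ} {w w' : ℕ → V}
    (hc : CongWalks G side n w w') : ∀ j, j ≤ n → side (w j) = side (w' j) := by
  intro j
  induction j with
  | zero => intro _; exact hc.1
  | succ k ih =>
    intro hk
    rw [side_flip hbip (hc.2.1 k (by omega)), side_flip hbip (hc.2.2.1 k (by omega)),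
      ih (by omega)]

lemma walk_parity (hbip : IsBipartition G side) {n : ℕ} {w : ℕ → V} (hw : IsWalk G n w) :
    ∀ j, j ≤ n → side (w j) = (if j % 2 = 0 then side (w 0) else !(side (w 0))) := by
  intro j
  induction j with
  | zero => intro _; simp
  | succ k ih =>
    intro hk
    rw [side_flip hbip (hw k (by omega)), ih (by omega)]
    rcases Nat.mod_two_eq_zero_or_one k with h | h
    · have h2 : (k+1) % 2 = 1 := by omega
      simp [h, h2]
    · have h2 : (k+1) % 2 = 0 := by omega
      simp [h, h2]

lemma gamma_refl_s11 {x y : V} (h : side x = side y) : Gamma G side x y x y :=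
  ⟨0, fun _ => x, fun _ => y,
    ⟨h, fun i hi => absurd hi (Nat.not_lt_zero i), fun i hi => absurd hi (Nat.not_lt_zero i),
      fun i hi => absurd hi (Nat.not_lt_zero i)⟩, rfl, rfl, rfl, rfl⟩

lemma cong_trunc {n : ℕ} {w w' : ℕ → V} (h : CongWalks G side n w w') {k : ℕ} (hk : k ≤ n) :
    CongWalks G side k w w' :=
  ⟨h.1, fun i hi => h.2.1 i (by omega), fun i hi => h.2.2.1 i (by omega),
    fun i hi => h.2.2.2 i (by omega)⟩

lemma cong_rev (hbip : IsBipartition G side) {n : ℕ} {w w' : ℕ → V}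
    (h : CongWalks G side n w w') :
    CongWalks G side n (fun k => w (n - k)) (fun k => w' (n - k)) := by
  refine ⟨cong_side hbip h n le_rfl, ?_, ?_, ?_⟩ <;> intro i hi
  · have h1 := h.2.1 (n - i - 1) (by omega)
    have e1 : n - i - 1 + 1 = n - i := by omega
    have e2 : n - (i+1) = n - i - 1 := by omega
    rw [e1] at h1
    simp only [e2]
    exact h1.symm
  · have h1 := h.2.2.1 (n - i - 1) (by omega)
    have e1 : n - i - 1 + 1 = n - i := by omega
    have e2 : n - (i+1) = n - i - 1 := by omega
    rw [e1] at h1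
    simp only [e2]
    exact h1.symm
  · have h1 := h.2.2.2 (n - i - 1) (by omega)
    have e1 : n - i - 1 + 1 = n - i := by omega
    have e2 : n - (i+1) = n - i - 1 := by omega
    rw [e1] at h1
    simp only [e2]
    exact indep_rev h1

lemma gamma_symm (hbip : IsBipartition G side) {x y u v : V} (h : Gamma G side x y u v) :
    Gamma G side u v x y := by
  obtain ⟨n, w, w', hc, h0, h0', hn, hn'⟩ := h
  refine ⟨n, fun k => w (n - k), fun k => w' (n - k), cong_rev hbip hc, ?_, ?_, ?_, ?_⟩
  · show w (n - 0) = u; rw [Nat.sub_zero]; exact hn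
  · show w' (n - 0) = v; rw [Nat.sub_zero]; exact hn'
  · show w (n - n) = x; rw [Nat.sub_self]; exact h0
  · show w' (n - n) = y; rw [Nat.sub_self]; exact h0'

lemma gamma_trans_s11 {x y u v f g : V} (h1 : Gamma G side x y u v) (h2 : Gamma G side u v f g) :
    Gamma G side x y f g := by
  obtain ⟨n1, w1, w1', c1, a0, a0', a1, a1'⟩ := h1
  obtain ⟨n2, w2, w2', c2, b0, b0', b1, b1'⟩ := h2
  have hWa : ∀ k, k ≤ n1 → (if k < n1 then w1 k else w2 (k - n1)) = w1 k := by
    intro k hk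
    by_cases h : k < n1
    · simp [h]
    · have hk1 : k = n1 := by omega
      subst hk1
      simp only [lt_irrefl, if_false, Nat.sub_self]
      rw [b0, ← a1]
  have hW'a : ∀ k, k ≤ n1 → (if k < n1 then w1' k else w2' (k - n1)) = w1' k := by
    intro k hk
    by_cases h : k < n1
    · simp [h]
    · have hk1 : k = n1 := by omega
      subst hk1
      simp only [lt_irrefl, if_false, Nat.sub_self]
      rw [b0', ← a1']
  have hWb : ∀ k, n1 ≤ k → (if k < n1 then w1 k else w2 (k - n1)) = w2 (k - n1) := by
    intro k hk
    simp [show ¬ k < n1 by omega]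
  have hW'b : ∀ k, n1 ≤ k → (if k < n1 then w1' k else w2' (k - n1)) = w2' (k - n1) := by
    intro k hk
    simp [show ¬ k < n1 by omega]
  refine ⟨n1 + n2, fun k => if k < n1 then w1 k else w2 (k - n1),
    fun k => if k < n1 then w1' k else w2' (k - n1), ⟨?_, ?_, ?_, ?_⟩, ?_, ?_, ?_, ?_⟩
  · simp only [hWa 0 (by omega), hW'a 0 (by omega)]
    exact c1.1
  · intro i hi
    by_cases h : i + 1 ≤ n1
    · simp only [hWa i (by omega), hWa (i+1) h]
      exact c1.2.1 i (by omega)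
    · simp only [hWb i (by omega), hWb (i+1) (by omega)]
      rw [show i + 1 - n1 = (i - n1) + 1 by omega]
      exact c2.2.1 (i - n1) (by omega)
  · intro i hi
    by_cases h : i + 1 ≤ n1
    · simp only [hW'a i (by omega), hW'a (i+1) h]
      exact c1.2.2.1 i (by omega)
    · simp only [hW'b i (by omega), hW'b (i+1) (by omega)]
      rw [show i + 1 - n1 = (i - n1) + 1 by omega]
      exact c2.2.2.1 (i - n1) (by omega)
  · intro i hi
    by_cases h : i + 1 ≤ n1
    · simp only [hWa i (by omega), hWa (i+1) h, hW'a i (by omega), hW'a (i+1) h]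
      exact c1.2.2.2 i (by omega)
    · simp only [hWb i (by omega), hWb (i+1) (by omega), hW'b i (by omega),
        hW'b (i+1) (by omega)]
      rw [show i + 1 - n1 = (i - n1) + 1 by omega]
      exact c2.2.2.2 (i - n1) (by omega)
  · simp only [hWa 0 (by omega)]; exact a0
  · simp only [hW'a 0 (by omega)]; exact a0'
  · simp only [hWb (n1+n2) (by omega)]
    rw [show n1 + n2 - n1 = n2 by omega]; exact b1
  · simp only [hW'b (n1+n2) (by omega)]
    rw [show n1 + n2 - n1 = n2 by omega]; exact b1'

lemma gamma_one {x0 x1 y0 y1 : V} (h : Indep G x0 x1 y0 y1) (hs : side x0 = side y0) :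
    Gamma G side x0 y0 x1 y1 := by
  refine ⟨1, fun k => if k = 0 then x0 else x1, fun k => if k = 0 then y0 else y1,
    ⟨by simpa using hs, ?_, ?_, ?_⟩, by simp, by simp, by simp, by simp⟩
  · intro i hi
    have : i = 0 := by omega
    subst this
    simpa using h.1
  · intro i hi
    have : i = 0 := by omega
    subst this
    simpa using h.2.1
  · intro i hi
    have : i = 0 := by omega
    subst this
    simpa using h

lemma gamma_two_s11 {x0 x1 x2 y0 y1 y2 : V} (h1 : Indep G x0 x1 y0 y1)
    (h2 : Indep G x1 x2 y1 y2) (hs : side x0 = side y0) :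
    Gamma G side x0 y0 x2 y2 := by
  refine ⟨2, fun k => if k = 0 then x0 else if k = 1 then x1 else x2,
    fun k => if k = 0 then y0 else if k = 1 then y1 else y2,
    ⟨by simpa using hs, ?_, ?_, ?_⟩, by norm_num, by norm_num, by norm_num, by norm_num⟩
  · intro i hi
    interval_cases i
    · simpa using h1.1
    · simpa using h2.1
  · intro i hi
    interval_cases i
    · simpa using h1.2.1
    · simpa using h2.2.1
  · intro i hi
    interval_cases i
    · simpa using h1
    · simpa using h2

lemma stmt11_aux (hbip : IsBipartition G side) :
    ∀ n : ℕ, ∀ a b c d : V, ∀ w w' : ℕ → V,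
      side a = true → side c = true → a ≠ b → c ≠ d →
      CongWalks G side n w w' → w 0 = a → w' 0 = b → w n = c → w' n = d →
      (Relevant G side a c ∨ Relevant G side c b) →
      Gamma G side a c a b ∨ Gamma G side c b a b := by
  intro n
  induction n using Nat.strong_induction_on with
  | _ n IH =>
  intro a b c d w w' ha hc hab hcd cong h0 h0' hn hn' hrel
  have hsab : side a = side b := by rw [← h0, ← h0']; exact cong.1
  have hsb : side b = true := by rw [← hsab]; exact ha
  by_cases hca : c = a
  · subst hca
    exact Or.inr (gamma_refl_s11 hsab)
  by_cases hcb : c = b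
  · subst hcb
    exact Or.inl (gamma_refl_s11 hsab)
  -- gadget extraction
  have hgad : (∃ p q, Indep G a p c q) ∨ (∃ p q, Indep G c p b q) := by
    rcases hrel with h | h
    · left
      obtain ⟨f, g, ⟨m, u, u', cu, hu0, hu0', hum, hum'⟩, hne⟩ := h
      rcases m with _ | k
      · exact absurd (by rw [← hum, ← hum', hu0, hu0'] : (f, g) = (a, c)) hne
      · have hI := cu.2.2.2 0 (by omega)
        rw [hu0, hu0'] at hI
        exact ⟨u 1, u' 1, hI⟩
    · right
      obtain ⟨f, g, ⟨m, u, u', cu, hu0, hu0', hum, hum'⟩, hne⟩ := h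
      rcases m with _ | k
      · exact absurd (by rw [← hum, ← hum', hu0, hu0'] : (f, g) = (c, b)) hne
      · have hI := cu.2.2.2 0 (by omega)
        rw [hu0, hu0'] at hI
        exact ⟨u 1, u' 1, hI⟩
  obtain ⟨qs, hqs, hqsab⟩ : ∃ qs, G.Adj c qs ∧ (¬ G.Adj qs a ∨ ¬ G.Adj qs b) := by
    rcases hgad with ⟨p, q, hg⟩ | ⟨p, q, hg⟩
    · exact ⟨q, hg.2.1, Or.inl (nadj_symm hg.2.2.2.2.1)⟩
    · exact ⟨p, hg.1, Or.inr (nadj_symm hg.2.2.2.2.2)⟩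
  have hwalk := cong.2.1
  have hwalk' := cong.2.2.1
  have hind := cong.2.2.2
  have hside2 := cong_side hbip cong
  have hparW : ∀ j, j ≤ n → j % 2 = 0 → side (w j) = true := by
    intro j hj hj2
    have hp := walk_parity hbip hwalk j hj
    rw [if_pos hj2] at hp
    rw [hp, h0, ha]
  have hn2 : n % 2 = 0 := by
    by_contra hodd
    have hp := walk_parity hbip hwalk n le_rfl
    rw [if_neg (by omega)] at hp
    rw [hn, hc, h0, ha] at hp
    simp at hp
  have hInA : ∀ k, k ≤ n → Gamma G side (w k) (w' k) a b := by
    intro k hk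
    have := gamma_symm hbip ⟨k, w, w', cong_trunc cong hk, rfl, rfl, rfl, rfl⟩
    rwa [h0, h0'] at this
  have key : ∀ i, 2*i ≤ n →
      ((Gamma G side a c a b ∨ Gamma G side c b a b) ∨
       (Gamma G side (w (2*i)) c a c ∧ Gamma G side c (w' (2*i)) c b ∧
        w (2*i) ≠ c ∧ w' (2*i) ≠ c ∧
        (¬ G.Adj qs (w (2*i)) ∨ ¬ G.Adj qs (w' (2*i))) ∧
        (0 < i → ¬ G.Adj c (w (2*i - 1))))) := by
    intro i
    induction i with
    | zero =>
      intro _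
      right
      refine ⟨?_, ?_, ?_, ?_, ?_, ?_⟩
      · show Gamma G side (w 0) c a c
        rw [h0]; exact gamma_refl_s11 (ha.trans hc.symm)
      · show Gamma G side c (w' 0) c b
        rw [h0']; exact gamma_refl_s11 (hc.trans hsb.symm)
      · show w 0 ≠ c
        rw [h0]; exact fun h => hca h.symm
      · show w' 0 ≠ c
        rw [h0']; exact fun h => hcb h.symm
      · show ¬ G.Adj qs (w 0) ∨ ¬ G.Adj qs (w' 0)
        rw [h0, h0']; exact hqsab
      · intro h; exact absurd h (by omega)
    | succ i ih =>
      intro hle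
      rcases ih (by omega) with hgoal | ⟨hBs, hCt, hsc, htc, hqsor, hhist⟩
      · exact Or.inl hgoal
      obtain ⟨e1, e2, ne1, ne2, na1, na2⟩ := hind (2*i) (by omega)
      obtain ⟨f1, f2, -, nef, naf1, naf2⟩ := hind (2*i+1) (by omega)
      have hInA_st : Gamma G side (w (2*i)) (w' (2*i)) a b := hInA (2*i) (by omega)
      have hside_s : side (w (2*i)) = true := hparW (2*i) (by omega) (by omega)
      have hside_t : side (w' (2*i)) = true := by
        rw [← hside2 (2*i) (by omega)]; exact hside_s
      have hstd : Indep G (w (2*i+1)) (w (2*i)) (w' (2*i+1)) (w' (2*i)) :=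
        indep_rev ⟨e1, e2, ne1, ne2, na1, na2⟩
      by_cases hs'c : w (2*i+2) = c
      · -- harvest: next s-vertex is c : GOAL right
        have hcz : G.Adj c (w (2*i+1)) := by rw [← hs'c]; exact f1.symm
        have hcz' : ¬ G.Adj c (w' (2*i+1)) := by rw [← hs'c]; exact nadj_symm naf2
        have g1 : Gamma G side c (w' (2*i)) (w (2*i)) (w' (2*i)) :=
          gamma_two_s11 ⟨hcz, e2, Ne.symm htc, ne2, hcz', na2⟩ hstd (hc.trans hside_t.symm)
        exact Or.inl (Or.inr (gamma_trans_s11 (gamma_symm hbip hCt) (gamma_trans_s11 g1 hInA_st)))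
      by_cases ht'c : w' (2*i+2) = c
      · -- harvest: next t-vertex is c : GOAL left
        have hcz' : G.Adj c (w' (2*i+1)) := by rw [← ht'c]; exact f2.symm
        have hcz : ¬ G.Adj c (w (2*i+1)) := by rw [← ht'c]; exact nadj_symm naf1
        have g : Gamma G side (w (2*i)) c (w (2*i)) (w' (2*i)) :=
          gamma_two_s11 ⟨e1, hcz', hsc, ne2, na1, hcz⟩ hstd (hside_s.trans hc.symm)
        exact Or.inl (Or.inl (gamma_trans_s11 (gamma_symm hbip hBs) (gamma_trans_s11 g hInA_st)))
      by_cases hcz : G.Adj c (w (2*i+1))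
      · by_cases hcz' : G.Adj c (w' (2*i+1))
        · -- CASE 3
          rcases Nat.eq_zero_or_pos i with rfl | hipos
          · -- CASE 3 at i = 0
            left
            have hcz1 : G.Adj c (w 1) := hcz
            have hcz'1 : G.Adj c (w' 1) := hcz'
            have F1 : G.Adj (w 1) (w 2) := f1
            have F2 : G.Adj (w' 1) (w' 2) := f2
            have NEF : w 2 ≠ w' 2 := nef
            have NAF1 : ¬ G.Adj (w 1) (w' 2) := naf1
            have NAF2 : ¬ G.Adj (w' 1) (w 2) := naf2
            have E1 : Indep G a (w 1) b (w' 1) := by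
              have h := hind 0 (by omega)
              rwa [h0, h0'] at h
            obtain ⟨e1₀, e2₀, -, ne2₀, na1₀, na2₀⟩ := E1
            have hs₁c : w 2 ≠ c := hs'c
            have ht₁c : w' 2 ≠ c := ht'c
            have hac : a ≠ c := fun h => hca h.symm
            have hs₁b : w 2 ≠ b := fun h => NAF2 (by rw [h]; exact e2₀.symm)
            have hat₁ : a ≠ w' 2 := fun h => NAF1 (by rw [← h]; exact e1₀.symm)
            have hsw2 : side (w 2) = true := hparW 2 (by omega) (by omega)
            have hsw2' : side (w' 2) = true := by
              rw [← hside2 2 (by omega)]; exact hsw2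
            have hInA₂ : Gamma G side (w 2) (w' 2) a b := hInA 2 (by omega)
            have ICOMM : Indep G (w 1) a (w' 1) b :=
              ⟨e1₀.symm, e2₀.symm, ne2₀, hab, nadj_symm na2₀, nadj_symm na1₀⟩
            have g2std : Gamma G side (w 2) b a b :=
              gamma_two_s11 ⟨F1.symm, e2₀, hs₁b, ne2₀, nadj_symm NAF2, na2₀⟩ ICOMM
                (hsw2.trans hsb.symm)
            have gB2std : Gamma G side a (w' 2) a b :=
              gamma_two_s11 ⟨e1₀, F2.symm, hat₁, ne2₀, na1₀, nadj_symm NAF1⟩ ICOMM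
                (ha.trans hsw2'.symm)
            have hcong2 : CongWalks G side (n - 2)
                (fun k => w (2 + k)) (fun k => w' (2 + k)) := by
              refine ⟨hside2 2 (by omega), ?_, ?_, ?_⟩ <;> intro j hj
              · exact hwalk (2 + j) (by omega)
              · exact hwalk' (2 + j) (by omega)
              · exact hind (2 + j) (by omega)
            have hend1 : w (2 + (n - 2)) = c := by
              rw [show 2 + (n - 2) = n by omega]; exact hn
            have hend2 : w' (2 + (n - 2)) = d := by
              rw [show 2 + (n - 2) = n by omega]; exact hn'
            rcases hgad with ⟨p, q, hg⟩ | ⟨p, q, hg⟩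
            · -- G1 gadget : independent edges (a,p),(c,q)
              obtain ⟨gap, gcq, -, -, gnaq, gncp⟩ := hg
              have hpz' : p ≠ w' 1 := fun h => gncp (by rw [h]; exact hcz'1)
              have hw1p : w 1 ≠ p := fun h => gncp (by rw [← h]; exact hcz1)
              by_cases hpb : G.Adj p b
              · by_cases hps₁ : G.Adj p (w 2)
                · -- B2
                  have IBs₁ : Indep G (w 2) p c (w' 1) :=
                    ⟨hps₁.symm, hcz'1, hs₁c, hpz', nadj_symm NAF2, gncp⟩
                  have Bs₁ : Gamma G side (w 2) c a c :=
                    gamma_two_s11 IBs₁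
                      ⟨gap.symm, hcz'1.symm, hpz', hac, nadj_symm gncp, nadj_symm na1₀⟩
                      (hsw2.trans hc.symm)
                  have hRel₁ : Relevant G side (w 2) c :=
                    ⟨p, w' 1, gamma_one IBs₁ (hsw2.trans hc.symm),
                      fun hEq => hps₁.ne (congrArg Prod.fst hEq)⟩
                  by_cases hpt₁ : G.Adj p (w' 2)
                  · -- B2a : use the induction hypothesis on the suffix
                    have ICt₁ : Indep G c (w 1) (w' 2) p :=
                      ⟨hcz1, hpt₁.symm, Ne.symm ht₁c, hw1p, gncp, nadj_symm NAF1⟩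
                    have Ct₁ : Gamma G side c (w' 2) c b :=
                      gamma_two_s11 ICt₁
                        ⟨hcz1.symm, hpb, hw1p, hcb, nadj_symm na2₀, nadj_symm gncp⟩
                        (hc.trans hsw2'.symm)
                    have hsuffix := IH (n - 2) (by omega) (w 2) (w' 2) c d
                      (fun k => w (2 + k)) (fun k => w' (2 + k)) hsw2 hc NEF hcd hcong2
                      rfl rfl hend1 hend2 (Or.inl hRel₁)
                    rcases hsuffix with hout | hout
                    · exact Or.inl (gamma_trans_s11 (gamma_symm hbip Bs₁)
                        (gamma_trans_s11 hout hInA₂))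
                    · exact Or.inr (gamma_trans_s11 (gamma_symm hbip Ct₁)
                        (gamma_trans_s11 hout hInA₂))
                  · -- B2b : GOAL left
                    have gA : Gamma G side a c a (w' 2) :=
                      gamma_two_s11 ⟨gap, hcz'1, hac, hpz', na1₀, gncp⟩
                        ⟨gap.symm, F2, hpz', hat₁, hpt₁, nadj_symm na1₀⟩
                        (ha.trans hc.symm)
                    exact Or.inl (gamma_trans_s11 gA gB2std)
                · -- B1 : GOAL right
                  have g1 : Gamma G side c b (w 2) b :=
                    gamma_two_s11 ⟨hcz1, hpb.symm, hcb, hw1p, gncp, na2₀⟩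
                      ⟨F1, hpb, hw1p, hs₁b, nadj_symm na2₀, hps₁⟩ (hc.trans hsb.symm)
                  exact Or.inr (gamma_trans_s11 g1 g2std)
              · -- A : GOAL left
                have g : Gamma G side a c a b :=
                  gamma_two_s11 ⟨gap, hcz'1, hac, hpz', na1₀, gncp⟩
                    ⟨gap.symm, e2₀.symm, hpz', hab, hpb, nadj_symm na1₀⟩
                    (ha.trans hc.symm)
                exact Or.inl g
            · -- G2 gadget : independent edges (c,p),(b,q)
              obtain ⟨gcp, gbq, -, -, gncq, gnbp⟩ := hg
              have hw1q : w 1 ≠ q := fun h => gncq (by rw [← h]; exact hcz1)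
              have hqz'1 : q ≠ w' 1 := fun h => gncq (by rw [h]; exact hcz'1)
              by_cases hqa : G.Adj q a
              · by_cases hqt₁ : G.Adj q (w' 2)
                · -- B2'
                  have ICt₁ : Indep G c (w 1) (w' 2) q :=
                    ⟨hcz1, hqt₁.symm, Ne.symm ht₁c, hw1q, gncq, nadj_symm NAF1⟩
                  have Ct₁ : Gamma G side c (w' 2) c b :=
                    gamma_two_s11 ICt₁
                      ⟨hcz1.symm, gbq.symm, hw1q, hcb, nadj_symm na2₀, nadj_symm gncq⟩
                      (hc.trans hsw2'.symm)
                  have hRel₁ : Relevant G side c (w' 2) :=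
                    ⟨w 1, q, gamma_one ICt₁ (hc.trans hsw2'.symm),
                      fun hEq => hcz1.ne' (congrArg Prod.fst hEq)⟩
                  by_cases hqs₁ : G.Adj q (w 2)
                  · -- B2a'
                    have Bs₁ : Gamma G side (w 2) c a c :=
                      gamma_two_s11 ⟨hqs₁.symm, hcz'1, hs₁c, hqz'1, nadj_symm NAF2, gncq⟩
                        ⟨hqa, hcz'1.symm, hqz'1, hac, nadj_symm gncq, nadj_symm na1₀⟩
                        (hsw2.trans hc.symm)
                    have hsuffix := IH (n - 2) (by omega) (w 2) (w' 2) c d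
                      (fun k => w (2 + k)) (fun k => w' (2 + k)) hsw2 hc NEF hcd hcong2
                      rfl rfl hend1 hend2 (Or.inr hRel₁)
                    rcases hsuffix with hout | hout
                    · exact Or.inl (gamma_trans_s11 (gamma_symm hbip Bs₁)
                        (gamma_trans_s11 hout hInA₂))
                    · exact Or.inr (gamma_trans_s11 (gamma_symm hbip Ct₁)
                        (gamma_trans_s11 hout hInA₂))
                  · -- B2b' : GOAL right
                    have g1 : Gamma G side c b (w 2) b :=
                      gamma_two_s11 ⟨hcz1, gbq, hcb, hw1q, gncq, na2₀⟩
                        ⟨F1, gbq.symm, hw1q, hs₁b, nadj_symm na2₀, hqs₁⟩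
                        (hc.trans hsb.symm)
                    exact Or.inr (gamma_trans_s11 g1 g2std)
                · -- B1' : GOAL left
                  have gA : Gamma G side a c a (w' 2) :=
                    gamma_two_s11 ⟨hqa.symm, hcz'1, hac, hqz'1, na1₀, gncq⟩
                      ⟨hqa, F2, hqz'1, hat₁, hqt₁, nadj_symm na1₀⟩ (ha.trans hc.symm)
                  exact Or.inl (gamma_trans_s11 gA gB2std)
              · -- A' : GOAL right
                have g : Gamma G side c b a b :=
                  gamma_two_s11 ⟨hcz1, gbq, hcb, hw1q, gncq, na2₀⟩
                    ⟨e1₀.symm, gbq.symm, hw1q, hab, nadj_symm na2₀, hqa⟩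
                    (hc.trans hsb.symm)
                exact Or.inr g
          · have hzz : 2*i - 1 + 1 = 2*i := by omega
            have e_zp : G.Adj (w (2*i-1)) (w (2*i)) := by
              have := hwalk (2*i-1) (by omega)
              rwa [hzz] at this
            have hist : ¬ G.Adj c (w (2*i-1)) := hhist hipos
            have hIrel : Indep G (w (2*i)) (w (2*i-1)) c (w' (2*i+1)) :=
              ⟨e_zp.symm, hcz', hsc, fun h => hist (by rw [h]; exact hcz'), na1, hist⟩
            have hRel : Relevant G side (w (2*i)) c :=
              ⟨w (2*i-1), w' (2*i+1), gamma_one hIrel (hside_s.trans hc.symm),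
                fun hEq => e_zp.ne (congrArg Prod.fst hEq)⟩
            have hcong2 : CongWalks G side (n - 2*i)
                (fun k => w (2*i + k)) (fun k => w' (2*i + k)) := by
              refine ⟨hside2 (2*i) (by omega), ?_, ?_, ?_⟩ <;> intro j hj
              · exact hwalk (2*i + j) (by omega)
              · exact hwalk' (2*i + j) (by omega)
              · exact hind (2*i + j) (by omega)
            have hsuffix := IH (n - 2*i) (by omega) (w (2*i)) (w' (2*i)) c d
              (fun k => w (2*i + k)) (fun k => w' (2*i + k)) hside_s hc ne1 hcd hcong2
              rfl rfl
              (by show w (2*i + (n - 2*i)) = c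
                  rw [show 2*i + (n - 2*i) = n by omega]; exact hn)
              (by show w' (2*i + (n - 2*i)) = d
                  rw [show 2*i + (n - 2*i) = n by omega]; exact hn')
              (Or.inl hRel)
            rcases hsuffix with hout | hout
            · exact Or.inl (Or.inl (gamma_trans_s11 (gamma_symm hbip hBs)
                (gamma_trans_s11 hout hInA_st)))
            · exact Or.inl (Or.inr (gamma_trans_s11 (gamma_symm hbip hCt)
                (gamma_trans_s11 hout hInA_st)))
        · -- case 1 : GOAL right
          have g1 : Gamma G side c (w' (2*i)) (w (2*i)) (w' (2*i)) :=
            gamma_two_s11 ⟨hcz, e2, Ne.symm htc, ne2, hcz', na2⟩ hstd (hc.trans hside_t.symm)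
          exact Or.inl (Or.inr (gamma_trans_s11 (gamma_symm hbip hCt) (gamma_trans_s11 g1 hInA_st)))
      · by_cases hcz' : G.Adj c (w' (2*i+1))
        · -- case 2 : GOAL left
          have g : Gamma G side (w (2*i)) c (w (2*i)) (w' (2*i)) :=
            gamma_two_s11 ⟨e1, hcz', hsc, ne2, na1, hcz⟩ hstd (hside_s.trans hc.symm)
          exact Or.inl (Or.inl (gamma_trans_s11 (gamma_symm hbip hBs) (gamma_trans_s11 g hInA_st)))
        · -- case 4
          have hqz : w (2*i+1) ≠ qs := fun h => hcz (by rw [h]; exact hqs)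
          have hqz' : qs ≠ w' (2*i+1) := fun h => hcz' (by rw [← h]; exact hqs)
          by_cases hqss : G.Adj qs (w (2*i))
          · have hqst : ¬ G.Adj qs (w' (2*i)) := hqsor.resolve_left (fun h => h hqss)
            have g1 : Gamma G side c (w' (2*i)) (w (2*i)) (w' (2*i)) :=
              gamma_two_s11 ⟨hqs, e2, Ne.symm htc, hqz', hcz', fun h => hqst h.symm⟩
                ⟨hqss, e2.symm, hqz', ne1, hqst, nadj_symm na1⟩ (hc.trans hside_t.symm)
            exact Or.inl (Or.inr (gamma_trans_s11 (gamma_symm hbip hCt)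
              (gamma_trans_s11 g1 hInA_st)))
          by_cases hqst : G.Adj qs (w' (2*i))
          · have g : Gamma G side (w (2*i)) c (w (2*i)) (w' (2*i)) :=
              gamma_two_s11 ⟨e1, hqs, hsc, hqz, fun h => hqss h.symm, hcz⟩
                ⟨e1.symm, hqst, hqz, ne1, nadj_symm na2, hqss⟩ (hside_s.trans hc.symm)
            exact Or.inl (Or.inl (gamma_trans_s11 (gamma_symm hbip hBs)
              (gamma_trans_s11 g hInA_st)))
          by_cases hqss' : G.Adj qs (w (2*i+2))
          · -- 4-iii-a : GOAL right
            have hs't : w (2*i+2) ≠ w' (2*i) := fun h => hqst (by rw [← h]; exact hqss')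
            have g_rot : Gamma G side (w (2*i+2)) (w' (2*i)) (w (2*i)) (w' (2*i)) :=
              gamma_two_s11 ⟨f1.symm, e2, hs't, ne2, nadj_symm naf2, na2⟩ hstd
                ((hparW (2*i+2) (by omega) (by omega)).trans hside_t.symm)
            have g_mv : Gamma G side c (w' (2*i)) (w (2*i+2)) (w' (2*i)) :=
              gamma_two_s11 ⟨hqs, e2, Ne.symm htc, hqz', hcz', fun h => hqst h.symm⟩
                ⟨hqss', e2.symm, hqz', hs't, hqst, naf2⟩ (hc.trans hside_t.symm)
            exact Or.inl (Or.inr (gamma_trans_s11 (gamma_symm hbip hCt)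
              (gamma_trans_s11 g_mv (gamma_trans_s11 g_rot hInA_st))))
          by_cases hqst' : G.Adj qs (w' (2*i+2))
          · -- 4-iii-b : GOAL left
            have hIb : Indep G (w (2*i+2)) (w (2*i+1)) c qs :=
              ⟨f1.symm, hqs, hs'c, hqz, fun h => hqss' h.symm, hcz⟩
            have hIsz : Indep G (w (2*i)) (w (2*i+1)) c qs :=
              ⟨e1, hqs, hsc, hqz, fun h => hqss h.symm, hcz⟩
            have hsides' : side (w (2*i+2)) = side c :=
              (hparW (2*i+2) (by omega) (by omega)).trans hc.symm
            have gB : Gamma G side (w (2*i+2)) c (w (2*i)) c :=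
              gamma_two_s11 hIb (indep_rev hIsz) hsides'
            have hBs' : Gamma G side (w (2*i+2)) c a c := gamma_trans_s11 gB hBs
            have g2 : Gamma G side (w (2*i+2)) c (w (2*i+2)) (w' (2*i+2)) :=
              gamma_two_s11 hIb ⟨f1, hqst', hqz, nef, naf1, hqss'⟩ hsides'
            have hInA2 := hInA (2*i+2) (by omega)
            exact Or.inl (Or.inl (gamma_trans_s11 (gamma_symm hbip hBs')
              (gamma_trans_s11 g2 hInA2)))
          · -- 4-iii-c : transfer
            have hIb : Indep G (w (2*i+2)) (w (2*i+1)) c qs :=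
              ⟨f1.symm, hqs, hs'c, hqz, fun h => hqss' h.symm, hcz⟩
            have hIsz : Indep G (w (2*i)) (w (2*i+1)) c qs :=
              ⟨e1, hqs, hsc, hqz, fun h => hqss h.symm, hcz⟩
            have hsides' : side (w (2*i+2)) = side c :=
              (hparW (2*i+2) (by omega) (by omega)).trans hc.symm
            have gB : Gamma G side (w (2*i+2)) c (w (2*i)) c :=
              gamma_two_s11 hIb (indep_rev hIsz) hsides'
            have hside_t' : side (w' (2*i+2)) = true := by
              rw [← hside2 (2*i+2) (by omega)]
              exact hparW (2*i+2) (by omega) (by omega)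
            have hIct' : Indep G c qs (w' (2*i+2)) (w' (2*i+1)) :=
              ⟨hqs, f2.symm, Ne.symm ht'c, hqz', hcz', fun h => hqst' h.symm⟩
            have gC : Gamma G side c (w' (2*i+2)) c (w' (2*i)) :=
              gamma_two_s11 hIct'
                ⟨hqs.symm, e2.symm, hqz', Ne.symm htc, hqst, nadj_symm hcz'⟩
                (hc.trans hside_t'.symm)
            refine Or.inr ⟨gamma_trans_s11 gB hBs, gamma_trans_s11 gC hCt, hs'c, ht'c,
              Or.inl hqss', fun _ => hcz⟩
  have hfin := key (n / 2) (by omega)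
  rcases hfin with hgoal | ⟨_, _, hne, _⟩
  · exact hgoal
  · exact absurd (by rw [show 2*(n/2) = n by omega]; exact hn) hne

end TriangleLemmaAux

/-- if `a, b, c, d ∈ X` with `(a,b) Γ (c,d)` and one of `(a,c)`,
`(c,b)` is relevant, then `(a,c) Γ (a,b)` or `(c,b) Γ (a,b)`. -/
theorem stmt_11 (G : SimpleGraph V) (side : V → Bool) (hbip : IsBipartition G side)
    (a b c d : V) (ha : side a = true) (hb : side b = true)
    (hc : side c = true) (hd : side d = true)
    (hab : a ≠ b) (hcd : c ≠ d)
    (h : Gamma G side a b c d)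
    (hrel : Relevant G side a c ∨ Relevant G side c b) :
    Gamma G side a c a b ∨ Gamma G side c b a b := by
  obtain ⟨n, w, w', cong, h0, h0', hn, hn'⟩ := h
  exact stmt11_aux hbip n a b c d w w' ha hc hab hcd cong h0 h0' hn hn' hrel

end CocompBigraph
end

section
/- Let G be a bipartite graph with bipartition (X,Y) and let G⁺ be the auxiliary graph on the vertex set F of ordered pairs of distinct same-side vertices, where (u,v) is adjacent to (v,u) and to all (z,w) such that uw and vz are independent edges of G. If G⁺ is bipartite, then the complement of G admits a T-free orientation. -/
namespace CocompBigraph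

variable {V : Type*}

/-- if the auxiliary graph `G⁺` is bipartite, then the complement of
`G` admits a `T`-free orientation. -/
theorem stmt_15 (G : SimpleGraph V) (side : V → Bool) (hbip : IsBipartition G side)
    (h : AuxBipartite G side) :
    ∃ O : V → V → Prop, IsOrientation side O ∧ TFree G side O := by
  obtain ⟨c, hc⟩ := h
  refine ⟨fun u v => ∃ h : u ≠ v ∧ side u = side v, c ⟨(u, v), h⟩ = true, ?_, ?_⟩
  · constructor
    · rintro u v ⟨⟨hne, hs⟩, -⟩
      exact ⟨hs, hne⟩
    · intro u v hne hs
      have hadj : AuxAdj G (u, v) (v, u) := Or.inl ⟨rfl, rfl⟩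
      have hne' := hc ⟨(u, v), hne, hs⟩ ⟨(v, u), hne.symm, hs.symm⟩ hadj
      have e1 : (∃ h : u ≠ v ∧ side u = side v, c ⟨(u, v), h⟩ = true) ↔
          c ⟨(u, v), hne, hs⟩ = true :=
        ⟨fun ⟨_, h⟩ => h, fun h => ⟨⟨hne, hs⟩, h⟩⟩
      have e2 : (∃ h : v ≠ u ∧ side v = side u, c ⟨(v, u), h⟩ = true) ↔
          c ⟨(v, u), hne.symm, hs.symm⟩ = true :=
        ⟨fun ⟨_, h⟩ => h, fun h => ⟨⟨hne.symm, hs.symm⟩, h⟩⟩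
      beta_reduce
      rw [e1, e2]
      cases hb1 : c ⟨(u, v), hne, hs⟩ <;>
        cases hb2 : c ⟨(v, u), hne.symm, hs.symm⟩ <;> simp_all
  · intro x y x' y' hsx hsy hxy hxx' hyy' hAxy hAx'y' hAxy' hAx'y
    rintro ⟨⟨hx, h1⟩, ⟨hy, h2⟩⟩
    have hadj : AuxAdj G (x, x') (y, y') :=
      Or.inr ⟨hAxy', hAx'y, hxx', hyy', hAxy, hAx'y'⟩
    exact hc ⟨(x, x'), hx⟩ ⟨(y, y'), hy⟩ hadj (h1.trans h2.symm)

end CocompBigraph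
end

section
/- Let G be a bipartite graph with auxiliary graph G⁺ defined on ordered pairs of distinct same-side vertices, where (u,v) ~ (v,u) and (u,v) ~ (z,w) whenever uw and vz are independent edges of G. If the complement of G admits a T-free orientation, then G⁺ is bipartite. -/
namespace CocompBigraph

variable {V : Type*}

/-- if the complement of `G` admits a `T`-free orientation, then the
auxiliary graph `G⁺` is bipartite. -/
theorem stmt_16 (G : SimpleGraph V) (side : V → Bool) (hbip : IsBipartition G side)
    (h : ∃ O : V → V → Prop, IsOrientation side O ∧ TFree G side O) :
    AuxBipartite G side := by
  classical
  obtain ⟨O, ⟨hO1, hO2⟩, hT⟩ := h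
  refine ⟨fun p => decide (O p.1.1 p.1.2), ?_⟩
  rintro ⟨⟨a, b⟩, hab, hsab⟩ ⟨⟨c, d⟩, hcd, hscd⟩ hadj
  simp only [ne_eq, decide_eq_decide]
  have hOba : ¬ O a b → O b a := fun hO => by
    by_contra h'
    exact hO ((hO2 a b hab hsab).mpr h')
  rcases hadj with ⟨h1, h2⟩ | ⟨h1, h2, h3, h4, h5, h6⟩
  · -- (c,d) = (b,a)
    dsimp at h1 h2 ⊢
    rw [h1, h2]
    intro heq
    by_cases hO : O a b
    · exact ((hO2 a b hab hsab).mp hO) (heq.mp hO)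
    · exact hO (heq.mpr (hOba hO))
  · dsimp at h1 h2 h5 h6 ⊢
    have hOdc : ¬ O c d → O d c := fun hO => by
      by_contra h'
      exact hO ((hO2 c d hcd hscd).mpr h')
    have hside : side a ≠ side c := fun he => hbip a d h1 (he.trans hscd)
    intro heq
    by_cases hO : O a b
    · exact hT a c b d hsab hscd hside hab hcd h5 h6 h1 h2 ⟨hO, heq.mp hO⟩
    · exact hT b d a c hsab.symm hscd.symm
        (fun he => hside ((hsab.trans he).trans hscd.symm))
        (Ne.symm hab) (Ne.symm hcd) h6 h5 h2 h1
        ⟨hOba hO, hOdc (fun h' => hO (heq.mpr h'))⟩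

end CocompBigraph
end

section
/- If a bipartite graph G contains an induced cycle of length at least 8, then G is not a cocomparability bigraph (i.e., G has no S-free pair of orderings). -/
namespace CocompBigraph

variable {V : Type*}

/-- if a bipartite graph contains an induced cycle of length at least
`8`, then it has no `S`-free pair of orderings. -/
theorem stmt_18 (G : SimpleGraph V) (side : V → Bool) (hbip : IsBipartition G side)
    (h : ∃ m, 8 ≤ m ∧ HasInducedCycle G m) :
    ¬ SFreePair G side := by
  rintro ⟨lt, _hlt1, htot, _htrans, hS⟩
  obtain ⟨m, hm, f, hinj, hadj⟩ := h
  set c : ℕ → V := fun i => f (i : ZMod m) with hcdef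
  have hc : ∀ i : ℕ, c i = f (i : ZMod m) := fun _ => rfl
  have hmodne : ∀ a b : ℕ, a < b → b - a < m → ((a : ZMod m) ≠ (b : ZMod m)) := by
    intro a b h1 h2 hc'
    rw [ZMod.natCast_eq_natCast_iff] at hc'
    have hd := (Nat.modEq_iff_dvd' h1.le).mp hc'
    have := Nat.le_of_dvd (by omega) hd
    omega
  have hcadj : ∀ i : ℕ, G.Adj (c i) (c (i+1)) := by
    intro i
    rw [hc i, hc (i+1), hadj]
    refine ⟨hmodne i (i+1) (by omega) (by omega), Or.inl ?_⟩
    push_cast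
    ring
  have hcnadj : ∀ i g : ℕ, 2 ≤ g → g + 2 ≤ m → ¬ G.Adj (c i) (c (i+g)) := by
    intro i g hg1 hg2 hA
    rw [hc i, hc (i+g), hadj] at hA
    obtain ⟨h0, h1 | h1⟩ := hA
    · have he : ((i+g : ℕ) : ZMod m) = ((i+1 : ℕ) : ZMod m) := by
        push_cast at h1 ⊢; exact h1
      exact hmodne (i+1) (i+g) (by omega) (by omega) he.symm
    · have he : ((i : ℕ) : ZMod m) = ((i+g+1 : ℕ) : ZMod m) := by
        push_cast at h1 ⊢; exact h1
      exact hmodne i (i+g+1) (by omega) (by omega) he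
  have hcne : ∀ i g : ℕ, 1 ≤ g → g < m → c i ≠ c (i+g) := by
    intro i g h1 h2 he
    rw [hc, hc] at he
    exact hmodne i (i+g) (by omega) (by omega) (hinj he)
  -- convenient reformulations
  have hN : ∀ i j : ℕ, i + 2 ≤ j → j + 2 ≤ i + m → ¬ G.Adj (c i) (c j) := by
    intro i j h1 h2
    have := hcnadj i (j - i) (by omega) (by omega)
    rwa [show i + (j - i) = j by omega] at this
  have hN' : ∀ i j : ℕ, i + 2 ≤ j → j + 2 ≤ i + m → ¬ G.Adj (c j) (c i) :=
    fun i j h1 h2 hA => hN i j h1 h2 hA.symm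
  have hEd : ∀ i j : ℕ, j = i + 1 → G.Adj (c i) (c j) := fun i j hj => hj ▸ hcadj i
  have hD : ∀ i j : ℕ, i < j → j < i + m → c i ≠ c j := by
    intro i j h1 h2
    have := hcne i (j - i) (by omega) (by omega)
    rwa [show i + (j - i) = j by omega] at this
  have hflip : ∀ j : ℕ, side (c (j+2)) = side (c j) := by
    intro j
    have s1 := hbip _ _ (hcadj j)
    have s2 := hbip _ _ (hcadj (j+1))
    rw [show j+1+1 = j+2 by omega] at s2
    revert s1 s2
    cases hb1 : side (c j) <;> cases hb2 : side (c (j+1)) <;>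
      cases hb3 : side (c (j+2)) <;> simp
  have heven : ∀ i d : ℕ, side (c (i + 2*d)) = side (c i) := by
    intro i d
    induction d with
    | zero => simp
    | succ k ih =>
      rw [show i + 2*(k+1) = (i + 2*k) + 2 by ring, hflip, ih]
  have hSide : ∀ i j : ℕ, i ≤ j → (j - i) % 2 = 0 → side (c i) = side (c j) := by
    intro i j h1 h2
    have := heven i ((j - i)/2)
    rw [show i + 2*((j - i)/2) = j by omega] at this
    exact this.symm
  have hcm : c m = c 0 := by
    rw [hc, hc]
    norm_num [ZMod.natCast_self]
  have hmeven : m % 2 = 0 := by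
    by_contra hodd
    have hs := heven 1 (m/2)
    rw [show 1 + 2*(m/2) = m by omega, hcm] at hs
    exact hbip _ _ (hcadj 0) (by simpa using hs)
  -- the key "parallel edges" rule from the S-free pair
  have par : ∀ x y x' y' : V, G.Adj x y → G.Adj x' y' → ¬ G.Adj x y' → ¬ G.Adj x' y →
      x ≠ x' → y ≠ y' → side x = side x' → side y = side y' → (lt x x' ↔ lt y y') := by
    intro x y x' y' e1 e2 n1 n2 hxx hyy sx sy
    have sxy : side x ≠ side y := hbip _ _ e1
    constructor
    · intro hl
      by_contra hn
      have hl2 : lt y' y := (htot y' y (Ne.symm hyy) sy.symm).mpr hn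
      rcases hS x x' y' y (fun hh => sxy (hh.trans sy.symm)) hl hl2 e1 e2 with hA | hA
      · exact n1 hA
      · exact n2 hA
    · intro hl
      by_contra hn
      have hl2 : lt x' x := (htot x' x (Ne.symm hxx) sx.symm).mpr hn
      rcases hS y y' x' x (fun hh => sxy (sx.trans hh.symm)) hl hl2 e1.symm e2.symm with hA | hA
      · exact n2 hA.symm
      · exact n1 hA.symm
  -- shift rule at gap 4
  have T0 : ∀ i : ℕ, (lt (c i) (c (i+4)) ↔ lt (c (i+1)) (c (i+5))) := by
    intro i
    exact par (c i) (c (i+1)) (c (i+4)) (c (i+5)) (hEd i (i+1) rfl)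
      (hEd (i+4) (i+5) (by omega)) (hN i (i+5) (by omega) (by omega))
      (hN' (i+1) (i+4) (by omega) (by omega)) (hD i (i+4) (by omega) (by omega))
      (hD (i+1) (i+5) (by omega) (by omega)) (hSide i (i+4) (by omega) (by omega))
      (hSide (i+1) (i+5) (by omega) (by omega))
  -- descent rule: gap 2d+4 at i  ↔  gap 2d+2 at i+1
  have Sstep : ∀ (i d : ℕ), 2*d + 6 ≤ m →
      (lt (c i) (c (i+2*d+4)) ↔ lt (c (i+1)) (c (i+2*d+3))) := by
    intro i d hd
    exact par (c i) (c (i+1)) (c (i+2*d+4)) (c (i+2*d+3)) (hEd i (i+1) rfl)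
      ((hEd (i+2*d+3) (i+2*d+4) (by omega)).symm)
      (hN i (i+2*d+3) (by omega) (by omega))
      (hN' (i+1) (i+2*d+4) (by omega) (by omega))
      (hD i (i+2*d+4) (by omega) (by omega))
      (hD (i+1) (i+2*d+3) (by omega) (by omega))
      (hSide i (i+2*d+4) (by omega) (by omega))
      (hSide (i+1) (i+2*d+3) (by omega) (by omega))
  have shift4 : ∀ i : ℕ, (lt (c i) (c (i+4)) ↔ lt (c 0) (c 4)) := by
    intro i
    induction i with
    | zero => norm_num
    | succ k ih =>
      rw [show k+1+4 = k+5 by omega]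
      exact (T0 k).symm.trans ih
  have Ddesc : ∀ d : ℕ, 2*d + 6 ≤ m → ∀ i : ℕ,
      (lt (c i) (c (i+2*d+4)) ↔ lt (c 0) (c 4)) := by
    intro d
    induction d with
    | zero =>
      intro _ i
      have := shift4 i
      rwa [show i+4 = i+2*0+4 by ring] at this
    | succ k ih =>
      intro hk i
      have s := Sstep i (k+1) (by omega)
      rw [show i+2*(k+1)+3 = (i+1)+2*k+4 by ring] at s
      exact s.trans (ih (by omega) (i+1))
  obtain ⟨d, hd⟩ : ∃ d : ℕ, m = 2*d + 6 := ⟨(m-6)/2, by omega⟩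
  have h1 : lt (c 0) (c (m-2)) ↔ lt (c 0) (c 4) := by
    have := Ddesc d (by omega) 0
    rwa [show (0:ℕ)+2*d+4 = m-2 by omega] at this
  have h2 : lt (c (m-2)) (c 0) ↔ lt (c 0) (c 4) := by
    have s := Sstep (m-3) 0 (by omega)
    have s4 := shift4 (m-3)
    rw [show m-3+2*0+4 = m-3+4 by omega, show m-3+1 = m-2 by omega,
      show m-3+2*0+3 = m by omega, hcm] at s
    exact s.symm.trans s4
  have htot' := htot (c 0) (c (m-2)) (hD 0 (m-2) (by omega) (by omega))
    (hSide 0 (m-2) (by omega) (by omega))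
  tauto

end CocompBigraph
end
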